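/- arXiv:1406.3815 — 8 statements merged into one kernel-verified Lean document; each statement's English description precedes it below -/
import Mathlib

section
/- Let X be a complex Banach space which is a Grothendieck space and let T ∈ L(X). Then the Banach-space adjoint T* ∈ L(X*) is injective if and only if the triple adjoint T*** ∈ L(X***) is injective; that is, ker(T*) = {0} holds if and only if ker(T***) = {0} holds. -/
open Filter Topology Metric
open scoped ENNReal

noncomputable section

namespace JClassPaper

variable {X : Type*} [NormedAddCommGroup X] [NormedSpace ℂ X]

/-- The Banach-space adjoint `T* φ = φ ∘ T` of a bounded operator. -/
def adj (T : X →L[ℂ] X) : StrongDual ℂ X →L[ℂ] StrongDual ℂ X :=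
  (ContinuousLinearMap.compL ℂ X X ℂ).flip T

/-- The point spectrum (set of eigenvalues). -/
def pointSpectrum (T : X →L[ℂ] X) : Set ℂ := {z | ∃ x : X, x ≠ 0 ∧ T x = z • x}

/-- `T` is tauberian if `(T**)⁻¹(j_X(X)) ⊆ j_X(X)`. -/
def Tauberian (T : X →L[ℂ] X) : Prop :=
  ∀ F : StrongDual ℂ (StrongDual ℂ X),
    adj (adj T) F ∈ Set.range (NormedSpace.inclusionInDoubleDual ℂ X) →
      F ∈ Set.range (NormedSpace.inclusionInDoubleDual ℂ X)

/-- Fredholm: finite-dimensional kernel, closed range of finite codimension. -/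
def Fredholm (T : X →L[ℂ] X) : Prop :=
  FiniteDimensional ℂ (LinearMap.ker (T : X →ₗ[ℂ] X)) ∧ IsClosed (LinearMap.range (T : X →ₗ[ℂ] X) : Set X) ∧
    FiniteDimensional ℂ (X ⧸ LinearMap.range (T : X →ₗ[ℂ] X))

/-- The essential spectrum. -/
def essSpectrum (T : X →L[ℂ] X) : Set ℂ := {z | ¬ Fredholm (T - z • (1 : X →L[ℂ] X))}

/-- The J-set of `x` under `T`. -/
def JSet (T : X →L[ℂ] X) (x : X) : Set X :=
  {y | ∃ k : ℕ → ℕ, StrictMono k ∧ ∃ u : ℕ → X,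
    Tendsto u atTop (𝓝 x) ∧ Tendsto (fun n => (T ^ k n) (u n)) atTop (𝓝 y)}

/-- The mixing J-set of `x` under `T`. -/
def JMixSet (T : X →L[ℂ] X) (x : X) : Set X :=
  {y | ∃ u : ℕ → X, Tendsto u atTop (𝓝 x) ∧ Tendsto (fun n => (T ^ n) (u n)) atTop (𝓝 y)}

/-- `T` is J-class if `J_T(x) = X` for some `x ≠ 0`. -/
def JClass (T : X →L[ℂ] X) : Prop := ∃ x : X, x ≠ 0 ∧ JSet T x = Set.univ

/-- `T` is J^mix-class if `J^mix_T(x) = X` for some `x ≠ 0`. -/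
def JMixClass (T : X →L[ℂ] X) : Prop := ∃ x : X, x ≠ 0 ∧ JMixSet T x = Set.univ

/-- A Banach space is a Grothendieck space if weak*-null sequences in the dual are weakly null. -/
def Grothendieck (X : Type*) [NormedAddCommGroup X] [NormedSpace ℂ X] : Prop :=
  ∀ φ : ℕ → StrongDual ℂ X,
    (∀ x : X, Tendsto (fun n => φ n x) atTop (𝓝 (0 : ℂ))) →
    ∀ F : StrongDual ℂ (StrongDual ℂ X),
      Tendsto (fun n => F (φ n)) atTop (𝓝 (0 : ℂ))

/-- The surjectivity modulus `s(T) = sup {r ≥ 0 : T(B_X) ⊇ r·B_X}`. -/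
def smod (T : X →L[ℂ] X) : ℝ :=
  sSup {r : ℝ | 0 ≤ r ∧ closedBall (0 : X) r ⊆ T '' closedBall 0 1}

/-- `δ(T) = lim_n s(Tⁿ)^{1/n} = sup_n s(Tⁿ)^{1/n}` (by supermultiplicativity of `s`). -/
def dmod (T : X →L[ℂ] X) : ℝ := ⨆ n : ℕ, smod (T ^ (n + 1)) ^ ((1 : ℝ) / (n + 1))

/-- The injectivity modulus `κ(T) = inf {‖Tx‖ : ‖x‖ = 1}`. -/
def kmod (T : X →L[ℂ] X) : ℝ := sInf {r : ℝ | ∃ x : X, ‖x‖ = 1 ∧ r = ‖T x‖}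

/-- `i(T) = lim_n κ(Tⁿ)^{1/n} = sup_n κ(Tⁿ)^{1/n}` (by supermultiplicativity of `κ`). -/
def imod (T : X →L[ℂ] X) : ℝ := ⨆ n : ℕ, kmod (T ^ (n + 1)) ^ ((1 : ℝ) / (n + 1))

/-- The space `l∞` of bounded complex sequences. -/
abbrev linf := lp (fun _ : ℕ => ℂ) ∞

/-- The space `l¹` of absolutely summable complex sequences. -/
abbrev lone := lp (fun _ : ℕ => ℂ) 1

/-- `T ∈ L(l∞)` is the adjoint of `S ∈ L(l¹)`: `⟪Tx, y⟫ = ⟪x, Sy⟫` for all `x, y`. -/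
def IsAdjointOf (T : linf →L[ℂ] linf) (S : lone →L[ℂ] lone) : Prop :=
  ∀ (x : linf) (y : lone), ∑' n, (T x) n * y n = ∑' n, x n * (S y) n

/-- `c₀`, the subspace of `l∞` of null sequences. -/
def c0 : Submodule ℂ linf where
  carrier := {x | Tendsto (fun n => x n) atTop (𝓝 (0 : ℂ))}
  add_mem' := by
    intro a b ha hb
    have h := ha.add hb
    simp only [Set.mem_setOf_eq] at *
    simpa [lp.coeFn_add, Pi.add_apply] using h
  zero_mem' := by
    simp only [Set.mem_setOf_eq]
    simpa [lp.coeFn_zero] using (tendsto_const_nhds : Tendsto (fun _ : ℕ => (0:ℂ)) atTop (𝓝 0))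
  smul_mem' := by
    intro c a ha
    simp only [Set.mem_setOf_eq] at *
    have h := ha.const_mul c
    simpa [lp.coeFn_smul, Pi.smul_apply, smul_eq_mul] using h

lemma adj_apply (T : X →L[ℂ] X) (φ : StrongDual ℂ X) (x : X) :
    adj T φ x = φ (T x) := rfl

/-- Approximate Helly theorem for two functionals. -/
lemma helly {E : Type*} [NormedAddCommGroup E] [NormedSpace ℂ E]
    (Φ : StrongDual ℂ (StrongDual ℂ E)) (A B : StrongDual ℂ E)
    {r δ : ℝ} (hr : ‖Φ‖ < r) (hδ : 0 < δ) :
    ∃ x : E, ‖x‖ ≤ r ∧ ‖A x - Φ A‖ < δ ∧ ‖B x - Φ B‖ < δ := by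
  by_contra hcon
  push_neg at hcon
  have hr0 : 0 < r := lt_of_le_of_lt (norm_nonneg Φ) hr
  set S : Set (ℂ × ℂ) := (fun x => (A x, B x)) '' closedBall (0 : E) r with hS
  have hp : (Φ A, Φ B) ∉ closure S := by
    intro hmem
    rw [Metric.mem_closure_iff] at hmem
    obtain ⟨b, hbS, hbd⟩ := hmem δ hδ
    obtain ⟨x, hx, rfl⟩ := hbS
    rw [mem_closedBall, dist_zero_right] at hx
    rw [Prod.dist_eq, max_lt_iff, dist_comm] at hbd
    obtain ⟨h1, h2⟩ := hbd
    rw [dist_eq_norm] at h1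
    rw [dist_comm, dist_eq_norm] at h2
    exact absurd h2 (not_lt.2 (hcon x hx h1))
  have hSconv : Convex ℝ (closure S) := by
    apply Convex.closure
    apply Convex.is_linear_image (convex_closedBall _ _)
    constructor
    · intro a b; simp [Prod.ext_iff]
    · intro c a
      simp [Prod.ext_iff, ContinuousLinearMap.map_smul_of_tower]
  obtain ⟨f, u, hfS, hfu⟩ := geometric_hahn_banach_closed_point hSconv isClosed_closure hp
  set c : ℂ := (f (1, 0) : ℂ) - f (Complex.I, 0) * Complex.I with hc
  set d : ℂ := (f (0, 1) : ℂ) - f (0, Complex.I) * Complex.I with hd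
  have hf : ∀ z w : ℂ, f (z, w) = (c * z).re + (d * w).re := by
    intro z w
    have hzw : (z, w) = z.re • ((1:ℂ), (0:ℂ)) + z.im • (Complex.I, (0:ℂ))
        + w.re • ((0:ℂ), (1:ℂ)) + w.im • ((0:ℂ), Complex.I) := by
      simp [Prod.ext_iff, Complex.ext_iff, Complex.real_smul]
    rw [hzw, map_add, map_add, map_add, map_smul, map_smul, map_smul, map_smul]
    simp only [hc, hd, smul_eq_mul, Complex.mul_re, Complex.sub_re, Complex.sub_im,
      Complex.ofReal_re, Complex.ofReal_im, Complex.mul_im, Complex.I_re, Complex.I_im]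
    ring
  set ψ : StrongDual ℂ E := c • A + d • B with hψ
  have hψx : ∀ x : E, f (A x, B x) = (ψ x).re := by
    intro x
    rw [hf]
    simp [hψ, Complex.add_re]
  have hfp' : f (Φ A, Φ B) = (Φ ψ).re := by
    have h1 : Φ ψ = c * Φ A + d * Φ B := by
      simp [hψ, map_add, map_smul, smul_eq_mul]
    rw [hf, h1]
    simp [Complex.add_re]
  have hmem : ∀ x : E, ‖x‖ ≤ r → (A x, B x) ∈ S :=
    fun x hx => ⟨x, by rwa [mem_closedBall, dist_zero_right], rfl⟩
  have hub : ∀ x : E, ‖x‖ ≤ r → (ψ x).re < u := by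
    intro x hx
    rw [← hψx]
    exact hfS _ (subset_closure (hmem x hx))
  have hu0 : 0 < u := by
    have := hub 0 (by simp [hr0.le])
    simpa using this
  have hnorm : ∀ x : E, ‖x‖ ≤ r → ‖ψ x‖ ≤ u := by
    intro x hx
    rcases eq_or_ne (ψ x) 0 with h | h
    · simp [h, hu0.le]
    · set sc : ℂ := (‖ψ x‖ : ℂ) / ψ x with hsc
      have hsc1 : ‖sc‖ = 1 := by
        rw [hsc, norm_div, Complex.norm_real, Real.norm_of_nonneg (norm_nonneg _)]
        exact div_self (norm_ne_zero_iff.2 h)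
      have hval : ψ (sc • x) = (‖ψ x‖ : ℂ) := by
        rw [map_smul, smul_eq_mul, hsc, div_mul_cancel₀ _ h]
      have h2 := hub (sc • x) (by rw [norm_smul, hsc1, one_mul]; exact hx)
      rw [hval] at h2
      simpa using h2.le
  have hψnorm : ‖ψ‖ ≤ u / r := by
    apply ContinuousLinearMap.opNorm_le_bound _ (by positivity)
    intro x
    rcases eq_or_ne x 0 with rfl | hx0
    · simp
    · have hxpos : 0 < ‖x‖ := norm_pos_iff.2 hx0
      have hsm : ‖(r / ‖x‖) • x‖ = r := by
        rw [norm_smul, Real.norm_of_nonneg (by positivity)]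
        field_simp
      have h3 := hnorm ((r / ‖x‖) • x) (le_of_eq hsm)
      rw [ContinuousLinearMap.map_smul_of_tower, norm_smul,
        Real.norm_of_nonneg (by positivity)] at h3
      rw [div_mul_eq_mul_div, div_le_iff₀ hxpos] at h3
      rw [div_mul_eq_mul_div, le_div_iff₀ hr0]
      linarith [mul_comm r ‖ψ x‖]
  have h1 : u < (Φ ψ).re := by rw [← hfp']; exact hfu
  have h2 : (Φ ψ).re ≤ ‖Φ ψ‖ := by
    exact Complex.re_le_norm _
  have h3 : ‖Φ ψ‖ ≤ ‖Φ‖ * ‖ψ‖ := Φ.le_opNorm ψ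
  have h4 : ‖Φ‖ * ‖ψ‖ ≤ ‖Φ‖ * (u / r) :=
    mul_le_mul_of_nonneg_left hψnorm (norm_nonneg Φ)
  have h5 : ‖Φ‖ * (u / r) < r * (u / r) :=
    mul_lt_mul_of_pos_right hr (by positivity)
  have h6 : r * (u / r) = u := by field_simp
  linarith

lemma mem_closure_range {T : X →L[ℂ] X} (hker : LinearMap.ker (adj T : StrongDual ℂ X →ₗ[ℂ] StrongDual ℂ X) = ⊥) (x : X) :
    x ∈ closure ((LinearMap.range (T : X →ₗ[ℂ] X) : Submodule ℂ X) : Set X) := by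
  by_contra hx
  have hconv : Convex ℝ (closure ((LinearMap.range (T : X →ₗ[ℂ] X) : Submodule ℂ X) : Set X)) :=
    (((LinearMap.range (T : X →ₗ[ℂ] X)).restrictScalars ℝ).convex).closure
  obtain ⟨f, u, hfx, hfC⟩ := geometric_hahn_banach_point_closed hconv isClosed_closure hx
  have hu : u < 0 := by
    have := hfC 0 (subset_closure (LinearMap.range (T : X →ₗ[ℂ] X)).zero_mem)
    simpa using this
  have hvanish : ∀ y, y ∈ LinearMap.range (T : X →ₗ[ℂ] X) → f y = 0 := by
    intro y hy
    by_contra hfy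
    have hmem : ((u - 1) / f y) • y ∈ closure ((LinearMap.range (T : X →ₗ[ℂ] X) : Submodule ℂ X) : Set X) :=
      subset_closure (((LinearMap.range (T : X →ₗ[ℂ] X)).restrictScalars ℝ).smul_mem _ hy)
    have h2 := hfC _ hmem
    rw [map_smul, smul_eq_mul, div_mul_cancel₀ _ hfy] at h2
    linarith
  set G : X →L[ℂ] ℂ := f.extendTo𝕜' with hG
  have hGre : ∀ z : X, (G z).re = f z := fun z => by
    have h := f.extendTo𝕜'_apply_re (𝕜 := ℂ) z
    rw [RCLike.re_to_complex] at h
    exact h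
  have hG0 : ∀ y, y ∈ LinearMap.range (T : X →ₗ[ℂ] X) → G y = 0 := by
    intro y hy
    have him : (G y).im = 0 := by
      have h1 : (G (Complex.I • y)).re = 0 := by
        rw [hGre]; exact hvanish _ ((LinearMap.range (T : X →ₗ[ℂ] X)).smul_mem _ hy)
      rw [map_smul, smul_eq_mul, Complex.mul_re, Complex.I_re, Complex.I_im] at h1
      linarith
    have hre : (G y).re = 0 := by rw [hGre]; exact hvanish _ hy
    exact Complex.ext hre him
  have hadj : adj T G = 0 := by
    ext z
    simp only [ContinuousLinearMap.zero_apply]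
    exact hG0 (T z) ⟨z, rfl⟩
  have hGz : G = 0 := by
    have hm : G ∈ LinearMap.ker (adj T : StrongDual ℂ X →ₗ[ℂ] StrongDual ℂ X) := LinearMap.mem_ker.2 hadj
    rw [hker] at hm
    simpa using hm
  rw [← hGre x, hGz] at hfx
  simp at hfx
  linarith

set_option maxHeartbeats 2000000

/-- If `X` is a complex Banach space which is a Grothendieck space and
`T ∈ L(X)`, then `ker (T*) = {0}` iff `ker (T***) = {0}`. -/
theorem stmt2 {X : Type*} [NormedAddCommGroup X] [NormedSpace ℂ X] [CompleteSpace X]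
    (hX : Grothendieck X) (T : X →L[ℂ] X) :
    LinearMap.ker (adj T : StrongDual ℂ X →ₗ[ℂ] StrongDual ℂ X) = ⊥ ↔
      LinearMap.ker (adj (adj (adj T)) : StrongDual ℂ (StrongDual ℂ (StrongDual ℂ X)) →ₗ[ℂ]
        StrongDual ℂ (StrongDual ℂ (StrongDual ℂ X))) = ⊥ := by
  constructor
  · -- hard direction
    intro hker
    apply (Submodule.eq_bot_iff _).2
    intro Φ hΦmem
    have hΦ : adj (adj (adj T)) Φ = 0 := LinearMap.mem_ker.1 hΦmem
    by_contra hΦne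
    have hex : ∃ F₀ : StrongDual ℂ (StrongDual ℂ X), Φ F₀ ≠ 0 := by
      by_contra h
      push_neg at h
      exact hΦne (ContinuousLinearMap.ext h)
    obtain ⟨F₀, hF₀⟩ := hex
    set Ψ := (Φ F₀)⁻¹ • Φ with hΨdef
    have hΨker : adj (adj (adj T)) Ψ = 0 := by
      rw [hΨdef, map_smul, hΦ]; exact smul_zero (M := ℂ) (A := StrongDual ℂ (StrongDual ℂ (StrongDual ℂ X))) _
    have hΨF₀ : Ψ F₀ = 1 := by
      rw [hΨdef]
      simp [inv_mul_cancel₀ hF₀]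
    set M := ‖Ψ‖ with hM
    have hM0 : 0 ≤ M := norm_nonneg _
    -- Step 1: almost-kernel vectors for T* that are big on F₀
    have step : ∀ ε : ℝ, 0 < ε → ∃ φ : StrongDual ℂ X,
        ‖φ‖ ≤ M + 1 ∧ (1:ℝ)/2 ≤ (F₀ φ).re ∧ ‖adj T φ‖ ≤ ε := by
      intro ε hε
      by_contra hcon
      push_neg at hcon
      set D : Set (StrongDual ℂ X) :=
        closedBall 0 (M+1) ∩ {φ | (1:ℝ)/2 ≤ (F₀ φ).re} with hD
      set K : Set (StrongDual ℂ X) := adj T '' D with hK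
      have h0K : (0 : StrongDual ℂ X) ∉ closure K := by
        intro h
        rw [Metric.mem_closure_iff] at h
        obtain ⟨b, hbK, hbd⟩ := h ε hε
        obtain ⟨φ, hφD, rfl⟩ := hbK
        have h1 := hcon φ (by simpa [dist_zero_right] using hφD.1) hφD.2
        rw [dist_comm, dist_zero_right] at hbd
        linarith
      have hKconv : Convex ℝ (closure K) := by
        apply Convex.closure
        apply Convex.is_linear_image
        · apply Convex.inter (convex_closedBall _ _)
          exact convex_halfSpace_ge
            ⟨fun a b => by simp [Complex.add_re], fun c a => by
              simp [ContinuousLinearMap.map_smul_of_tower, Complex.real_smul,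
                Complex.mul_re]⟩ _
        · exact ⟨fun a b => map_add _ a b, fun c a =>
            ContinuousLinearMap.map_smul_of_tower _ _ _⟩
      obtain ⟨f, u, hfK, hfu⟩ :=
        geometric_hahn_banach_closed_point hKconv isClosed_closure h0K
      have hu0 : u < 0 := by simpa using hfu
      set G : StrongDual ℂ X →L[ℂ] ℂ := f.extendTo𝕜' with hG
      have hGre : ∀ z, (G z).re = f z := fun z => by
        have h := f.extendTo𝕜'_apply_re (𝕜 := ℂ) z
        rw [RCLike.re_to_complex] at h
        exact h
      set H := adj (adj T) G with hH
      have hHre : ∀ φ ∈ D, (H φ).re < u := by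
        intro φ hφ
        have h1 : H φ = G (adj T φ) := rfl
        rw [h1, hGre]
        exact hfK _ (subset_closure ⟨φ, hφ, rfl⟩)
      have hΨH : Ψ H = 0 := by
        have h1 : Ψ H = (adj (adj (adj T)) Ψ) G := rfl
        rw [h1, hΨker]
        simp
      have hrM : ‖Ψ‖ < M + 1/2 := by rw [← hM]; linarith
      obtain ⟨φ, hφnorm, hφA, hφB⟩ := helly Ψ F₀ H hrM
        (δ := min (1/2) (-u)) (lt_min (by norm_num) (by linarith))
      rw [hΨF₀] at hφA
      rw [hΨH] at hφB
      have hre : (1:ℝ)/2 ≤ (F₀ φ).re := by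
        have h1 : ‖F₀ φ - 1‖ < 1/2 := lt_of_lt_of_le hφA (min_le_left _ _)
        have h2 : |(F₀ φ - 1).re| ≤ ‖F₀ φ - 1‖ := by
          exact Complex.abs_re_le_norm _
        rw [Complex.sub_re, Complex.one_re] at h2
        have := abs_lt.1 (lt_of_le_of_lt h2 h1)
        linarith [this.1]
      have hφD : φ ∈ D := ⟨by
        rw [mem_closedBall, dist_zero_right]; linarith, hre⟩
      have hHφ := hHre φ hφD
      have h3 : ‖H φ - 0‖ < -u := lt_of_lt_of_le hφB (min_le_right _ _)
      rw [sub_zero] at h3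
      have h4 : |(H φ).re| ≤ ‖H φ‖ := by
        exact Complex.abs_re_le_norm _
      have := abs_lt.1 (lt_of_le_of_lt h4 h3)
      linarith [this.1]
    -- choose the sequence
    choose φseq hφ1 hφ2 hφ3 using fun n : ℕ => step (1/(n+1)) (by positivity)
    -- weak-star null
    have hwstar : ∀ x : X, Tendsto (fun n => φseq n x) atTop (𝓝 (0:ℂ)) := by
      intro x
      rw [Metric.tendsto_atTop]
      intro η hη
      have hx := mem_closure_range hker x
      rw [Metric.mem_closure_iff] at hx
      obtain ⟨y', hy'mem, hy'⟩ := hx (η/(2*(M+2))) (by positivity)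
      obtain ⟨y, rfl⟩ := hy'mem
      obtain ⟨N, hN⟩ := exists_nat_gt (2 * ‖y‖ / η)
      refine ⟨N, fun n hn => ?_⟩
      rw [dist_zero_right]
      have hxy : ‖x - T y‖ < η/(2*(M+2)) := by rwa [← dist_eq_norm]
      have hb1 : ‖φseq n (x - T y)‖ ≤ (M+1) * ‖x - T y‖ := by
        calc ‖φseq n (x - T y)‖ ≤ ‖φseq n‖ * ‖x - T y‖ := (φseq n).le_opNorm _
          _ ≤ (M+1) * ‖x - T y‖ := by
              apply mul_le_mul_of_nonneg_right (hφ1 n) (norm_nonneg _)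
      have hb2 : ‖(adj T (φseq n)) y‖ ≤ (1/(n+1)) * ‖y‖ := by
        calc ‖(adj T (φseq n)) y‖ ≤ ‖adj T (φseq n)‖ * ‖y‖ := (adj T (φseq n)).le_opNorm _
          _ ≤ (1/(n+1)) * ‖y‖ := by
              apply mul_le_mul_of_nonneg_right (hφ3 n) (norm_nonneg _)
      have hsplit : φseq n x = φseq n (x - T y) + (adj T (φseq n)) y := by
        rw [adj_apply, map_sub]
        ring
      have hest1 : (M+1) * ‖x - T y‖ ≤ η/2 := by
        have h1 : (M+1) * ‖x - T y‖ ≤ (M+1) * (η/(2*(M+2))) :=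
          mul_le_mul_of_nonneg_left hxy.le (by linarith)
        have h2 : (M+1) * (η/(2*(M+2))) ≤ η/2 := by
          rw [mul_div_assoc', div_le_div_iff₀ (by positivity) (by norm_num : (0:ℝ) < 2)]
          nlinarith
        linarith
      have hest2 : (1/((n:ℝ)+1)) * ‖y‖ < η/2 := by
        have h1 : (1/((n:ℝ)+1)) * ‖y‖ ≤ (1/((N:ℝ)+1)) * ‖y‖ := by
          apply mul_le_mul_of_nonneg_right _ (norm_nonneg _)
          apply div_le_div_of_nonneg_left (by norm_num) (by positivity)
          have : (N:ℝ) ≤ (n:ℝ) := Nat.cast_le.2 hn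
          linarith
        have h2 : (1/((N:ℝ)+1)) * ‖y‖ < η/2 := by
          rw [div_mul_eq_mul_div, one_mul, div_lt_iff₀ (by positivity)]
          have h3 : 2 * ‖y‖ < η * (N:ℝ) := by
            rw [div_lt_iff₀ hη] at hN
            linarith [hN]
          have h4 : η * (N:ℝ) ≤ η * ((N:ℝ)+1) := by nlinarith [hη.le]
          calc ‖y‖ = (2 * ‖y‖) / 2 := by ring
            _ < (η * ((N:ℝ)+1)) / 2 := by linarith
            _ = η/2 * ((N:ℝ)+1) := by ring
        linarith
      calc ‖φseq n x‖ = ‖φseq n (x - T y) + (adj T (φseq n)) y‖ := by rw [← hsplit]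
        _ ≤ ‖φseq n (x - T y)‖ + ‖(adj T (φseq n)) y‖ := norm_add_le _ _
        _ ≤ (M+1) * ‖x - T y‖ + (1/(n+1)) * ‖y‖ := add_le_add hb1 hb2
        _ < η/2 + η/2 := by
            apply add_lt_add_of_le_of_lt hest1
            exact_mod_cast hest2
        _ = η := by ring
    -- Grothendieck property
    have hconv := hX φseq hwstar F₀
    have hev : ∀ᶠ n in atTop, ‖F₀ (φseq n)‖ < 1/2 := by
      have hn := hconv.norm
      simp only [norm_zero] at hn
      exact hn.eventually_lt_const (by norm_num)
    obtain ⟨n, hn⟩ := hev.exists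
    have h4 : (F₀ (φseq n)).re ≤ ‖F₀ (φseq n)‖ := by
      exact Complex.re_le_norm _
    have h5 := hφ2 n
    linarith
  · -- easy direction
    intro hker3
    apply (Submodule.eq_bot_iff _).2
    intro φ hφmem
    have hφ : adj T φ = 0 := LinearMap.mem_ker.1 hφmem
    set j := NormedSpace.inclusionInDoubleDual ℂ (StrongDual ℂ X) with hj
    have h1 : adj (adj (adj T)) (j φ) = 0 := by
      ext G
      simp only [ContinuousLinearMap.zero_apply]
      show (j φ) (adj (adj T) G) = 0
      rw [NormedSpace.dual_def]
      show G (adj T φ) = 0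
      rw [hφ, map_zero]
    have h2 := (Submodule.eq_bot_iff _).1 hker3 _ (LinearMap.mem_ker.2 h1)
    have h3 : ‖φ‖ = 0 := by
      have h4 : ‖j φ‖ = ‖φ‖ :=
        (NormedSpace.inclusionInDoubleDualLi ℂ (E := StrongDual ℂ X)).norm_map φ
      rw [h2] at h4
      rw [← h4]; exact ContinuousLinearMap.opNorm_zero
    exact norm_eq_zero.1 h3


end JClassPaper
end
end

section
/- Let X be a complex Banach space and T ∈ L(X). Assume there exists a vector x ∈ X such that the J-set J_T(x) has non-empty interior. Then for every λ ∈ ℂ with |λ| ≤ 1, the operator T − λI has dense range in X; equivalently, the Banach-space adjoint T* ∈ L(X*) has no eigenvalue λ with |λ| ≤ 1, i.e. σ_p(T*) ∩ 𝔻̄ = ∅. -/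
open Filter Topology Metric
open scoped ENNReal

noncomputable section

namespace JClassPaper

variable {X : Type*} [NormedAddCommGroup X] [NormedSpace ℂ X]

section Aux

variable {X : Type*} [NormedAddCommGroup X] [NormedSpace ℂ X]

/-- A continuous functional vanishing on a ball is zero. -/
lemma zero_of_zero_on_ball (φ : StrongDual ℂ X) (y0 : X) {ε : ℝ} (hε : 0 < ε)
    (h : ∀ w ∈ ball y0 ε, φ w = 0) : φ = 0 := by
  ext v
  rcases eq_or_ne v 0 with rfl | hv
  · simp
  · have hy0 : φ y0 = 0 := h y0 (by simp [hε])
    set t : ℝ := ε / (2 * ‖v‖) with ht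
    have hvpos : 0 < ‖v‖ := norm_pos_iff.mpr hv
    have htpos : 0 < t := by positivity
    have hmem : y0 + (t : ℂ) • v ∈ ball y0 ε := by
      rw [mem_ball, dist_eq_norm, add_sub_cancel_left, norm_smul]
      simp only [Complex.norm_real, Real.norm_eq_abs, abs_of_pos htpos]
      rw [ht]
      rw [div_mul_eq_mul_div, mul_comm]
      rw [div_lt_iff₀ (by positivity)]
      nlinarith
    have := h _ hmem
    rw [map_add, hy0, map_smul, zero_add, smul_eq_mul] at this
    have htne : (t : ℂ) ≠ 0 := by exact_mod_cast htpos.ne'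
    simpa [htne] using this

/-- If a submodule is not dense, there is a nonzero functional vanishing on it. -/
lemma exists_functional_of_not_dense (S : Submodule ℂ X) (h : ¬ Dense (S : Set X)) :
    ∃ φ : StrongDual ℂ X, φ ≠ 0 ∧ ∀ v ∈ S, φ v = 0 := by
  set C := S.topologicalClosure with hC
  haveI : IsClosed (C : Set X) := S.isClosed_topologicalClosure
  obtain ⟨y0, hy0⟩ : ∃ y0, y0 ∉ C := by
    by_contra hcon
    push_neg at hcon
    apply h
    rw [dense_iff_closure_eq, ← Submodule.topologicalClosure_coe]
    exact Set.eq_univ_of_forall hcon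
  have hmk : (Submodule.Quotient.mk y0 : X ⧸ C) ≠ 0 := by
    simpa [Submodule.Quotient.mk_eq_zero] using hy0
  obtain ⟨g, -, hg⟩ := exists_dual_vector ℂ (Submodule.Quotient.mk y0 : X ⧸ C) (norm_ne_zero_iff.mpr hmk)
  let π : X →L[ℂ] X ⧸ C :=
    LinearMap.mkContinuous C.mkQ 1 (fun m => by
      simpa using Submodule.Quotient.norm_mk_le C m)
  refine ⟨g.comp π, ?_, ?_⟩
  · intro hzero
    have h1 : g (π y0) = 0 := by
      have := congrFun (congrArg DFunLike.coe hzero) y0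
      simpa using this
    have h2 : g (π y0) = (‖(Submodule.Quotient.mk y0 : X ⧸ C)‖ : ℂ) := by
      simpa [π] using hg
    rw [h2] at h1
    have : ‖(Submodule.Quotient.mk y0 : X ⧸ C)‖ = 0 := by exact_mod_cast h1
    exact hmk (norm_eq_zero.mp this)
  · intro v hv
    have hvC : v ∈ C := S.le_topologicalClosure hv
    have : π v = 0 := by simpa [π, Submodule.Quotient.mk_eq_zero] using hvC
    simp [this]

/-- Key lemma: no eigenfunctional of the adjoint with eigenvalue in the closed disk. -/
lemma key {X : Type*} [NormedAddCommGroup X] [NormedSpace ℂ X]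
    (T : X →L[ℂ] X) (x : X) (hx : (interior (JSet T x)).Nonempty)
    (z : ℂ) (hz : ‖z‖ ≤ 1) (φ : StrongDual ℂ X) (hφ : φ ≠ 0)
    (heig : ∀ v : X, φ (T v) = z * φ v) : False := by
  have hiter : ∀ (k : ℕ) (v : X), φ ((T ^ k) v) = z ^ k * φ v := by
    intro k
    induction k with
    | zero => intro v; simp
    | succ n ih =>
      intro v
      have : (T ^ (n + 1)) v = (T ^ n) (T v) := by
        rw [pow_succ]
        rfl
      rw [this, ih (T v), heig v]
      ring
  obtain ⟨y0, hy0⟩ := hx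
  obtain ⟨ε, hε, hball⟩ := Metric.isOpen_iff.mp isOpen_interior y0 hy0
  have hballJ : ball y0 ε ⊆ JSet T x := hball.trans interior_subset
  -- limit along the J-set
  have hlim : ∀ y ∈ JSet T x,
      ∃ k : ℕ → ℕ, StrictMono k ∧ ∃ u : ℕ → X, Tendsto u atTop (𝓝 x) ∧
        Tendsto (fun n => z ^ k n * φ (u n)) atTop (𝓝 (φ y)) := by
    rintro y ⟨k, hk, u, hu, hTu⟩
    refine ⟨k, hk, u, hu, ?_⟩
    have : Tendsto (fun n => φ ((T ^ k n) (u n))) atTop (𝓝 (φ y)) :=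
      (φ.continuous.tendsto y).comp hTu
    simpa only [hiter] using this
  rcases lt_or_eq_of_le hz with hzlt | hzeq
  · -- |z| < 1 : φ vanishes on the J-set
    have hzero : ∀ y ∈ JSet T x, φ y = 0 := by
      intro y hy
      obtain ⟨k, hk, u, hu, hlim'⟩ := hlim y hy
      have hzk : Tendsto (fun n => z ^ k n) atTop (𝓝 0) :=
        (tendsto_pow_atTop_nhds_zero_of_norm_lt_one hzlt).comp hk.tendsto_atTop
      have hφu : Tendsto (fun n => φ (u n)) atTop (𝓝 (φ x)) :=
        (φ.continuous.tendsto x).comp hu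
      have : Tendsto (fun n => z ^ k n * φ (u n)) atTop (𝓝 (0 * φ x)) := hzk.mul hφu
      rw [zero_mul] at this
      exact (tendsto_nhds_unique hlim' this)
    exact hφ (zero_of_zero_on_ball φ y0 hε fun w hw => hzero w (hballJ hw))
  · -- |z| = 1 : |φ y| = |φ x| on the J-set
    have hconst : ∀ y ∈ JSet T x, ‖φ y‖ = ‖φ x‖ := by
      intro y hy
      obtain ⟨k, hk, u, hu, hlim'⟩ := hlim y hy
      have h1 : Tendsto (fun n => ‖z ^ k n * φ (u n)‖) atTop (𝓝 ‖φ y‖) :=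
        hlim'.norm
      have h2 : Tendsto (fun n => ‖z ^ k n * φ (u n)‖) atTop (𝓝 ‖φ x‖) := by
        have : (fun n => ‖z ^ k n * φ (u n)‖) = fun n => ‖φ (u n)‖ := by
          funext n
          rw [norm_mul, norm_pow, hzeq, one_pow, one_mul]
        rw [this]
        exact ((φ.continuous.tendsto x).comp hu).norm
      exact tendsto_nhds_unique h1 h2
    rcases eq_or_ne (φ x) 0 with hφx | hφx
    · -- φ vanishes on the ball
      refine hφ (zero_of_zero_on_ball φ y0 hε fun w hw => ?_)
      have := hconst w (hballJ hw)
      rw [hφx, norm_zero] at this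
      exact norm_eq_zero.mp this
    · -- |φ| constant nonzero on a ball: impossible
      set a := φ y0 with ha
      have haconst : ‖a‖ = ‖φ x‖ := hconst y0 (hballJ (mem_ball_self hε))
      have hane : a ≠ 0 := by
        intro h0
        rw [h0, norm_zero] at haconst
        exact hφx (norm_eq_zero.mp haconst.symm)
      -- show φ v = 0 for all v, contradicting a ≠ 0
      have hall : ∀ v : X, φ v = 0 := by
        intro v
        by_contra hb
        set b := φ v with hbdef
        have hvne : v ≠ 0 := by
          intro h0; apply hb; rw [hbdef, h0, map_zero]
        have hvpos : 0 < ‖v‖ := norm_pos_iff.mpr hvne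
        set t : ℝ := ε / (2 * (‖a / b‖ * ‖v‖ + 1)) with htdef
        have htpos : 0 < t := by positivity
        have hmem : y0 + ((t : ℂ) * (a / b)) • v ∈ ball y0 ε := by
          rw [mem_ball, dist_eq_norm]
          rw [add_sub_cancel_left, norm_smul, norm_mul]
          simp only [Complex.norm_real, Real.norm_eq_abs, abs_of_pos htpos]
          rw [htdef]
          rw [div_mul_eq_mul_div, div_mul_eq_mul_div, div_lt_iff₀ (by positivity)]
          nlinarith [mul_pos hε (show (0:ℝ) < ‖a / b‖ * ‖v‖ + 2 by positivity), mul_nonneg (norm_nonneg (a/b)) (norm_nonneg v)]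
        have hval : φ (y0 + ((t : ℂ) * (a / b)) • v) = a * (1 + t) := by
          rw [map_add, map_smul, smul_eq_mul, ← hbdef, ← ha]
          field_simp
        have := hconst _ (hballJ hmem)
        rw [hval, norm_mul, ← haconst] at this
        have h1t : ‖(1 : ℂ) + (t : ℂ)‖ = 1 + t := by
          rw [← Complex.ofReal_one, ← Complex.ofReal_add, Complex.norm_real,
            Real.norm_eq_abs, abs_of_pos (by linarith)]
        rw [h1t] at this
        have hanorm : 0 < ‖a‖ := norm_pos_iff.mpr hane
        nlinarith
      exact hane (hall y0)

end Aux

/-- Spectral lemma, part (i): if `J_T(x)` has non-empty interior for some `x`,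
then `T - λI` has dense range for every `|λ| ≤ 1`; equivalently `σ_p(T*) ∩ 𝔻̄ = ∅`. -/
theorem stmt3 {X : Type*} [NormedAddCommGroup X] [NormedSpace ℂ X] [CompleteSpace X]
    (T : X →L[ℂ] X) (x : X) (hx : (interior (JSet T x)).Nonempty) :
    (∀ z : ℂ, ‖z‖ ≤ 1 → DenseRange ⇑(T - z • (1 : X →L[ℂ] X))) ∧
      pointSpectrum (adj T) ∩ closedBall (0:ℂ) 1 = ∅ := by
  constructor
  · intro z hz
    by_contra hd
    set S : Submodule ℂ X := LinearMap.range ((T - z • (1 : X →L[ℂ] X)) : X →ₗ[ℂ] X) with hS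
    have hnd : ¬ Dense (S : Set X) := by
      have hset : (S : Set X) = Set.range ⇑(T - z • (1 : X →L[ℂ] X)) := by
        ext w
        simp [hS, LinearMap.mem_range, Set.mem_range]
      rw [hset]
      exact hd
    obtain ⟨φ, hφ, hvan⟩ := exists_functional_of_not_dense S hnd
    refine key T x hx z hz φ hφ ?_
    intro v
    have h0 : φ ((T - z • (1 : X →L[ℂ] X)) v) = 0 := hvan _ ⟨v, rfl⟩
    have h1 : (T - z • (1 : X →L[ℂ] X)) v = T v - z • v := by
      simp [ContinuousLinearMap.sub_apply, ContinuousLinearMap.smul_apply]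
    rw [h1, map_sub, map_smul, smul_eq_mul, sub_eq_zero] at h0
    exact h0
  · ext w
    simp only [Set.mem_inter_iff, Set.mem_empty_iff_false, iff_false, not_and]
    rintro ⟨φ, hφ, heq⟩ hw
    have hwn : ‖w‖ ≤ 1 := by simpa using mem_closedBall_zero_iff.mp hw
    refine key T x hx w hwn φ hφ ?_
    intro v
    have h1 : adj T φ v = φ (T v) := rfl
    have h2 : adj T φ v = (w • φ) v := by rw [heq]
    rw [h1] at h2
    simpa using h2


end JClassPaper
end
end

section
/- Let X be a complex Banach space and T ∈ L(X). Assume there exists a non-zero vector x ∈ X such that the J-set J_T(x) has non-empty interior. Then the spectrum of T meets the unit circle: σ(T) ∩ ∂𝔻 ≠ ∅. -/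
open Filter Topology Metric
open scoped ENNReal

noncomputable section

namespace JClassPaper

variable {X : Type*} [NormedAddCommGroup X] [NormedSpace ℂ X]

set_option linter.unusedSectionVars false

section SpectralAux

section Aux
variable {A : Type*} [NormedRing A] [NormedAlgebra ℂ A] [CompleteSpace A]

lemma commute_resolvent (T : A) (z : ℂ) : Commute T (resolvent T z) := by
  have h : Commute T (algebraMap ℂ A z - T) :=
    (Commute.sub_right ((Algebra.commutes z T).symm) (Commute.refl T))
  by_cases hz : IsUnit (algebraMap ℂ A z - T)
  · obtain ⟨u, hu⟩ := hz
    rw [resolvent, ← hu, Ring.inverse_unit]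
    exact (hu ▸ h : Commute T (u : A)).units_inv_right
  · simp [resolvent, Ring.inverse_non_unit _ hz]

lemma resolvent_identity_pow {T : A} {z : ℂ} (hz : IsUnit (algebraMap ℂ A z - T)) (n : ℕ) :
    z ^ n • resolvent T z = T ^ n * resolvent T z +
      ∑ j ∈ Finset.range n, z ^ j • T ^ (n - 1 - j) := by
  set a := algebraMap ℂ A z with ha
  have hC : Commute a T := Algebra.commutes z T
  have hres : resolvent T z * (a - T) = 1 := Ring.inverse_mul_cancel _ hz
  have h1 : z ^ n • resolvent T z = resolvent T z * a ^ n := by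
    rw [Algebra.smul_def, ← map_pow, ← Algebra.commutes (z ^ n) (resolvent T z)]
  have h2 : resolvent T z * (a ^ n - T ^ n) =
      ∑ j ∈ Finset.range n, a ^ j * T ^ (n - 1 - j) := by
    rw [← hC.mul_geom_sum₂ n, ← mul_assoc, hres, one_mul]
  have h3 : resolvent T z * a ^ n =
      T ^ n * resolvent T z + ∑ j ∈ Finset.range n, a ^ j * T ^ (n - 1 - j) := by
    have := h2
    rw [mul_sub] at this
    have hc : resolvent T z * T ^ n = T ^ n * resolvent T z :=
      ((commute_resolvent T z).pow_left n).eq.symm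
    rw [← this, hc]; abel
  rw [h1, h3]
  congr 1
  refine Finset.sum_congr rfl fun j _ => ?_
  rw [Algebra.smul_def, ← map_pow]

end Aux

section Aux
variable {A : Type*} [NormedRing A] [NormedAlgebra ℂ A] [CompleteSpace A]

lemma mul_circleIntegral {f : ℂ → A} {c : ℂ} {ρ : ℝ} (hf : CircleIntegrable f c ρ) (a : A) :
    a * (∮ z in C(c, ρ), f z) = ∮ z in C(c, ρ), a * f z := by
  have h := (ContinuousLinearMap.mul ℂ A a).intervalIntegral_comp_comm hf.out
  simp only [map_smul, ContinuousLinearMap.mul_apply'] at h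
  simp only [circleIntegral]
  exact h.symm

lemma circleIntegral_mul {f : ℂ → A} {c : ℂ} {ρ : ℝ} (hf : CircleIntegrable f c ρ) (a : A) :
    (∮ z in C(c, ρ), f z) * a = ∮ z in C(c, ρ), f z * a := by
  have h := ((ContinuousLinearMap.mul ℂ A).flip a).intervalIntegral_comp_comm hf.out
  simp only [map_smul, ContinuousLinearMap.flip_apply, ContinuousLinearMap.mul_apply'] at h
  simp only [circleIntegral]
  exact h.symm

lemma circleIntegral_finset_sum {ι : Type*} (s : Finset ι) (f : ι → ℂ → A) (c : ℂ) (ρ : ℝ)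
    (hf : ∀ i ∈ s, CircleIntegrable (f i) c ρ) :
    (∮ z in C(c, ρ), ∑ i ∈ s, f i z) = ∑ i ∈ s, ∮ z in C(c, ρ), f i z := by
  simp only [circleIntegral]
  rw [← intervalIntegral.integral_finset_sum (fun i hi => (hf i hi).out)]
  congr 1
  ext θ
  rw [Finset.smul_sum]

lemma continuousOn_resolvent {T : A} {s : Set ℂ}
    (h : ∀ z ∈ s, IsUnit (algebraMap ℂ A z - T)) :
    ContinuousOn (resolvent T) s := fun z hz =>
  ((spectrum.hasDerivAt_resolvent (show z ∈ resolventSet ℂ T from h z hz)).continuousAt).continuousWithinAt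

lemma circleIntegrable_zpow_smul_resolvent {T : A} {ρ : ℝ} (hρ : 0 < ρ)
    (h : ∀ z : ℂ, z ∈ sphere (0 : ℂ) ρ → IsUnit (algebraMap ℂ A z - T)) (m : ℤ) :
    CircleIntegrable (fun z => z ^ m • resolvent T z) 0 ρ := by
  refine ContinuousOn.circleIntegrable hρ.le ?_
  intro z hz
  have hz0 : z ≠ 0 := by
    intro hz0
    rw [mem_sphere_zero_iff_norm, hz0, norm_zero] at hz
    exact hρ.ne' hz.symm
  exact ((continuousAt_zpow₀ _ _ (Or.inl hz0)).continuousWithinAt).smul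
    (continuousOn_resolvent (fun w hw => h w hw) z hz)

lemma circleIntegrable_resolvent {T : A} {ρ : ℝ} (hρ : 0 < ρ)
    (h : ∀ z : ℂ, z ∈ sphere (0 : ℂ) ρ → IsUnit (algebraMap ℂ A z - T)) :
    CircleIntegrable (resolvent T) 0 ρ :=
  ContinuousOn.circleIntegrable hρ.le (continuousOn_resolvent (fun w hw => h w hw))

lemma circleIntegral_zpow_smul_const (m : ℤ) (hm : m ≠ -1) (a : A) (ρ : ℝ) :
    (∮ z in C(0, ρ), z ^ m • a) = 0 := by
  have h1 : (∮ z in C(0, ρ), z ^ m • a) = (∮ z in C(0, ρ), z ^ m) • a := by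
    have := circleIntegral.integral_smul_const (fun z : ℂ => z ^ m) a 0 ρ
    exact this
  have h2 : (∮ z in C(0, ρ), z ^ m) = 0 := by
    have := circleIntegral.integral_sub_zpow_of_ne hm 0 0 ρ
    simpa using this
  rw [h1, h2, zero_smul]

lemma circleIntegral_inv_smul_const (a : A) {ρ : ℝ} (hρ : 0 < ρ) :
    (∮ z in C(0, ρ), z⁻¹ • a) = (2 * Real.pi * Complex.I) • a := by
  have h1 : (∮ z in C(0, ρ), z⁻¹ • a) = (∮ z in C(0, ρ), z⁻¹) • a :=
    circleIntegral.integral_smul_const (fun z : ℂ => z⁻¹) a 0 ρ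
  have h2 : (∮ z in C(0, ρ), z⁻¹) = 2 * Real.pi * Complex.I := by
    have := circleIntegral.integral_sub_inv_of_mem_ball (c := (0:ℂ)) (w := 0) (R := ρ)
      (by simpa using hρ)
    simpa using this
  rw [h1, h2]

end Aux

section Aux
variable {A : Type*} [NormedRing A] [NormedAlgebra ℂ A] [CompleteSpace A]

lemma commute_circleIntegral_resolvent {T : A} {ρ : ℝ} (hρ : 0 < ρ)
    (h : ∀ z : ℂ, z ∈ sphere (0 : ℂ) ρ → IsUnit (algebraMap ℂ A z - T)) (m : ℤ) :
    Commute T (∮ z in C(0, ρ), z ^ m • resolvent T z) := by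
  have hi := circleIntegrable_zpow_smul_resolvent hρ h m
  show T * _ = _ * T
  rw [mul_circleIntegral hi T, circleIntegral_mul hi T]
  refine circleIntegral.integral_congr hρ.le fun z _ => ?_
  simp only [mul_smul_comm, smul_mul_assoc]
  rw [(commute_resolvent T z).eq]

/-- Key identity: `Tⁿ ∘ P(ρ) = (1/2πi)∮ zⁿ R(z) dz` in integral form. -/
lemma pow_mul_circleIntegral_resolvent {T : A} {ρ : ℝ} (hρ : 0 < ρ)
    (h : ∀ z : ℂ, z ∈ sphere (0 : ℂ) ρ → IsUnit (algebraMap ℂ A z - T)) (n : ℕ) :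
    T ^ n * (∮ z in C(0, ρ), resolvent T z) =
      ∮ z in C(0, ρ), z ^ (n : ℤ) • resolvent T z := by
  have hi0 := circleIntegrable_resolvent hρ h
  have hin := circleIntegrable_zpow_smul_resolvent hρ h (n : ℤ)
  have himul : CircleIntegrable (fun z => T ^ n * resolvent T z) 0 ρ := by
    refine ContinuousOn.circleIntegrable hρ.le ?_
    exact (continuousOn_const.mul (continuousOn_resolvent (fun w hw => h w hw)))
  rw [mul_circleIntegral hi0 (T ^ n)]
  have hsub : (∮ z in C(0, ρ), z ^ (n : ℤ) • resolvent T z) -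
      (∮ z in C(0, ρ), T ^ n * resolvent T z) =
      ∮ z in C(0, ρ), (z ^ (n : ℤ) • resolvent T z - T ^ n * resolvent T z) :=
    (circleIntegral.integral_sub hin himul).symm
  have hcongr : (∮ z in C(0, ρ), (z ^ (n : ℤ) • resolvent T z - T ^ n * resolvent T z)) =
      ∮ z in C(0, ρ), ∑ j ∈ Finset.range n, z ^ (j : ℤ) • T ^ (n - 1 - j) := by
    refine circleIntegral.integral_congr hρ.le fun z hz => ?_
    have := resolvent_identity_pow (h z hz) n
    rw [zpow_natCast]
    rw [this]
    simp only [zpow_natCast]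
    abel
  have hzero : (∮ z in C(0, ρ), ∑ j ∈ Finset.range n, z ^ (j : ℤ) • T ^ (n - 1 - j)) = 0 := by
    rw [circleIntegral_finset_sum]
    · refine Finset.sum_eq_zero fun j _ => ?_
      exact circleIntegral_zpow_smul_const _ (by omega) _ _
    · intro j _
      refine ContinuousOn.circleIntegrable hρ.le ?_
      exact ((continuous_id.zpow₀ (j : ℤ) (fun z => Or.inr (Int.ofNat_nonneg j))).smul continuous_const).continuousOn
  rw [hcongr, hzero] at hsub
  rw [sub_eq_zero] at hsub
  exact hsub.symm

end Aux
section Aux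
variable {A : Type*} [NormedRing A] [NormedAlgebra ℂ A] [CompleteSpace A]

lemma ne_zero_of_mem_sphere' {ρ : ℝ} (hρ : 0 < ρ) {z : ℂ} (hz : z ∈ sphere (0 : ℂ) ρ) :
    z ≠ 0 := by
  intro hz0
  rw [mem_sphere_zero_iff_norm, hz0, norm_zero] at hz
  exact hρ.ne' hz.symm

lemma circleIntegrable_zpow_smul_const {ρ : ℝ} (hρ : 0 < ρ) (m : ℤ) (a : A) :
    CircleIntegrable (fun z : ℂ => z ^ m • a) 0 ρ := by
  refine ContinuousOn.circleIntegrable hρ.le ?_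
  intro z hz
  exact ((continuousAt_zpow₀ _ _ (Or.inl (ne_zero_of_mem_sphere' hρ hz))).continuousWithinAt).smul
    continuousWithinAt_const

/-- Key identity: `Tⁿ ∘ Sₙ = P(ρ) - 2πi·1` for `n ≥ 1`. -/
lemma pow_mul_circleIntegral_resolvent_neg {T : A} {ρ : ℝ} (hρ : 0 < ρ)
    (h : ∀ z : ℂ, z ∈ sphere (0 : ℂ) ρ → IsUnit (algebraMap ℂ A z - T)) {n : ℕ} (hn : 0 < n) :
    T ^ n * (∮ z in C(0, ρ), z ^ (-(n : ℤ)) • resolvent T z) =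
      (∮ z in C(0, ρ), resolvent T z) - (2 * Real.pi * Complex.I) • (1 : A) := by
  have hi0 := circleIntegrable_resolvent hρ h
  have hineg := circleIntegrable_zpow_smul_resolvent hρ h (-(n : ℤ))
  rw [mul_circleIntegral hineg (T ^ n)]
  have hcongr : (∮ z in C(0, ρ), T ^ n * z ^ (-(n : ℤ)) • resolvent T z) =
      ∮ z in C(0, ρ), (resolvent T z -
        ∑ j ∈ Finset.range n, z ^ ((j : ℤ) - (n : ℤ)) • T ^ (n - 1 - j)) := by
    refine circleIntegral.integral_congr hρ.le fun z hz => ?_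
    have hz0 : z ≠ 0 := ne_zero_of_mem_sphere' hρ hz
    have hid := resolvent_identity_pow (h z hz) n
    have h1 : T ^ n * resolvent T z =
        z ^ n • resolvent T z - ∑ j ∈ Finset.range n, z ^ j • T ^ (n - 1 - j) := by
      rw [hid]; abel
    have h2 : T ^ n * z ^ (-(n : ℤ)) • resolvent T z
        = z ^ (-(n : ℤ)) • (T ^ n * resolvent T z) := (mul_smul_comm _ _ _)
    rw [h2, h1, smul_sub, smul_smul, Finset.smul_sum]
    congr 1
    · rw [← zpow_natCast z n, ← zpow_add₀ hz0]
      simp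
    · refine Finset.sum_congr rfl fun j _ => ?_
      rw [smul_smul, ← zpow_natCast z j, ← zpow_add₀ hz0]
      congr 2
      omega
  rw [hcongr]
  have hsum : CircleIntegrable
      (fun z => ∑ j ∈ Finset.range n, z ^ ((j : ℤ) - (n : ℤ)) • T ^ (n - 1 - j)) 0 ρ := by
    have : ∀ j ∈ Finset.range n,
        CircleIntegrable (fun z : ℂ => z ^ ((j : ℤ) - (n : ℤ)) • T ^ (n - 1 - j)) 0 ρ :=
      fun j _ => circleIntegrable_zpow_smul_const hρ _ _
    refine ContinuousOn.circleIntegrable hρ.le ?_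
    refine continuousOn_finset_sum _ fun j _ => ?_
    intro z hz
    exact ((continuousAt_zpow₀ _ _ (Or.inl (ne_zero_of_mem_sphere' hρ hz))).continuousWithinAt).smul
      continuousWithinAt_const
  rw [circleIntegral.integral_sub hi0 hsum]
  congr 1
  rw [circleIntegral_finset_sum _ _ _ _ (fun j _ => circleIntegrable_zpow_smul_const hρ _ _)]
  rw [Finset.sum_eq_single_of_mem (n - 1) (Finset.mem_range.mpr (by omega))]
  · have he : ((n - 1 : ℕ) : ℤ) - (n : ℤ) = -1 := by omega
    rw [he]
    have hT : T ^ (n - 1 - (n - 1)) = 1 := by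
      rw [Nat.sub_self, pow_zero]
    rw [hT]
    have : (fun z : ℂ => z ^ (-1 : ℤ) • (1 : A)) = fun z : ℂ => z⁻¹ • (1 : A) := by
      funext z; rw [zpow_neg_one]
    rw [this]
    exact circleIntegral_inv_smul_const 1 hρ
  · intro j hj hjne
    refine circleIntegral_zpow_smul_const _ ?_ _ _
    have hj' := Finset.mem_range.mp hj
    omega
end Aux
section Aux
variable {A : Type*} [NormedRing A] [NormedAlgebra ℂ A] [CompleteSpace A]

lemma norm_circleIntegral_zpow_smul_resolvent_le {T : A} {ρ M : ℝ} (hρ : 0 < ρ)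
    (hM : ∀ z : ℂ, z ∈ sphere (0 : ℂ) ρ → ‖resolvent T z‖ ≤ M) (m : ℤ) :
    ‖∮ z in C(0, ρ), z ^ m • resolvent T z‖ ≤ 2 * Real.pi * ρ * (ρ ^ m * M) := by
  have h := circleIntegral.norm_integral_le_of_norm_le_const (c := (0:ℂ)) (R := ρ)
    (f := fun z => z ^ m • resolvent T z) (C := ρ ^ m * M) hρ.le ?_
  · simpa using h
  · intro z hz
    have hn : ‖z‖ = ρ := mem_sphere_zero_iff_norm.mp hz
    rw [norm_smul, norm_zpow, hn]
    have h0 : (0:ℝ) ≤ ρ ^ m := zpow_nonneg hρ.le m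
    exact mul_le_mul_of_nonneg_left (hM z hz) h0

lemma circleIntegral_resolvent_annulus {T : A} {r s : ℝ} (hr : 0 < r) (hrs : r ≤ s)
    (h : ∀ z : ℂ, r ≤ ‖z‖ → ‖z‖ ≤ s → IsUnit (algebraMap ℂ A z - T)) :
    (∮ z in C(0, s), resolvent T z) = ∮ z in C(0, r), resolvent T z := by
  refine Complex.circleIntegral_eq_of_differentiable_on_annulus_off_countable hr hrs
    Set.countable_empty ?_ ?_
  · refine continuousOn_resolvent fun z hz => ?_
    obtain ⟨hz1, hz2⟩ := hz
    rw [mem_closedBall, dist_zero_right] at hz1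
    rw [mem_ball, dist_zero_right, not_lt] at hz2
    exact h z hz2 hz1
  · intro z hz
    obtain ⟨⟨hz1, hz2⟩, -⟩ := hz
    rw [mem_ball, dist_zero_right] at hz1
    rw [mem_closedBall, dist_zero_right, not_le] at hz2
    exact (spectrum.hasDerivAt_resolvent
      (show z ∈ resolventSet ℂ T from h z hz2.le hz1.le)).differentiableAt
end Aux

end SpectralAux

/-- Spectral lemma, part (ii): if `J_T(x)` has non-empty interior for some
non-zero `x`, then the spectrum of `T` meets the unit circle. -/
theorem stmt4 {X : Type*} [NormedAddCommGroup X] [NormedSpace ℂ X] [CompleteSpace X]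
    (T : X →L[ℂ] X) (x : X) (hx0 : x ≠ 0) (hx : (interior (JSet T x)).Nonempty) :
    (spectrum ℂ T ∩ sphere (0:ℂ) 1).Nonempty := by
  by_contra hcon
  rw [Set.not_nonempty_iff_eq_empty] at hcon
  -- Step 0: a closed annulus around the unit circle lies in the resolvent set
  have hann : ∃ δ : ℝ, 0 < δ ∧
      ∀ z : ℂ, |‖z‖ - 1| ≤ δ → IsUnit (algebraMap ℂ (X →L[ℂ] X) z - T) := by
    by_contra hno
    push_neg at hno
    have hzex : ∀ n : ℕ, ∃ z : ℂ, |‖z‖ - 1| ≤ 1 / ((n : ℝ) + 1) ∧ z ∈ spectrum ℂ T := by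
      intro n
      obtain ⟨z, h1, h2⟩ := hno (1 / ((n : ℝ) + 1)) (by positivity)
      exact ⟨z, h1, spectrum.mem_iff.mpr h2⟩
    choose z hz1 hz2 using hzex
    obtain ⟨w, hwK, φ, hφ, hlim⟩ := (spectrum.isCompact (𝕜 := ℂ) T).tendsto_subseq hz2
    have hnorm : Tendsto (fun n => |‖z (φ n)‖ - 1|) atTop (𝓝 |‖w‖ - 1|) :=
      ((hlim.norm).sub_const 1).abs
    have hzero : Tendsto (fun n : ℕ => 1 / ((n : ℝ) + 1)) atTop (𝓝 0) :=
      tendsto_one_div_add_atTop_nhds_zero_nat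
    have hle : ∀ n, |‖z (φ n)‖ - 1| ≤ 1 / ((n : ℝ) + 1) := by
      intro n
      refine (hz1 (φ n)).trans ?_
      have h : (n : ℝ) ≤ (φ n : ℝ) := Nat.cast_le.mpr hφ.le_apply
      exact one_div_le_one_div_of_le (by positivity) (by linarith)
    have habs : |‖w‖ - 1| ≤ 0 := le_of_tendsto_of_tendsto' hnorm hzero hle
    have hw1 : ‖w‖ = 1 := by
      have h0 : |‖w‖ - 1| = 0 := le_antisymm habs (abs_nonneg _)
      have := abs_eq_zero.mp h0
      linarith
    have hmem : w ∈ spectrum ℂ T ∩ sphere (0:ℂ) 1 :=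
      ⟨hwK, mem_sphere_zero_iff_norm.mpr hw1⟩
    rw [hcon] at hmem
    exact hmem
  obtain ⟨δ, hδ0, hδ⟩ := hann
  set δ' : ℝ := min δ (1/2) with hδ'def
  have hδ'0 : 0 < δ' := lt_min hδ0 (by norm_num)
  have hδ'12 : δ' ≤ 1/2 := min_le_right _ _
  have hδ'δ : δ' ≤ δ := min_le_left _ _
  set r : ℝ := 1 - δ' with hrdef
  set s : ℝ := 1 + δ' with hsdef
  have hr0 : 0 < r := by rw [hrdef]; linarith
  have hr1 : r < 1 := by rw [hrdef]; linarith
  have hs1 : 1 < s := by rw [hsdef]; linarith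
  have hs0 : 0 < s := zero_lt_one.trans hs1
  have hrs : r ≤ s := by rw [hrdef, hsdef]; linarith
  have hres : ∀ z : ℂ, r ≤ ‖z‖ → ‖z‖ ≤ s → IsUnit (algebraMap ℂ (X →L[ℂ] X) z - T) := by
    intro z h1 h2
    rw [hrdef] at h1; rw [hsdef] at h2
    exact hδ z (le_trans (abs_le.mpr ⟨by linarith, by linarith⟩) hδ'δ)
  have hres_r : ∀ z : ℂ, z ∈ sphere (0:ℂ) r → IsUnit (algebraMap ℂ (X →L[ℂ] X) z - T) := by
    intro z hz
    have h := mem_sphere_zero_iff_norm.mp hz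
    exact hres z (le_of_eq h.symm) (h ▸ hrs)
  have hres_s : ∀ z : ℂ, z ∈ sphere (0:ℂ) s → IsUnit (algebraMap ℂ (X →L[ℂ] X) z - T) := by
    intro z hz
    have h := mem_sphere_zero_iff_norm.mp hz
    exact hres z (h ▸ hrs) (le_of_eq h)
  obtain ⟨Mr, hMr⟩ := (isCompact_sphere (0:ℂ) r).exists_bound_of_continuousOn
    (continuousOn_resolvent (fun w hw => hres_r w hw))
  obtain ⟨Ms, hMs⟩ := (isCompact_sphere (0:ℂ) s).exists_bound_of_continuousOn
    (continuousOn_resolvent (fun w hw => hres_s w hw))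
  set Pr : X →L[ℂ] X := ∮ z in C(0, r), resolvent T z with hPrdef
  set Ps : X →L[ℂ] X := ∮ z in C(0, s), resolvent T z with hPsdef
  have hPrs : Ps = Pr := circleIntegral_resolvent_annulus hr0 hrs hres
  -- commutation of `Pr` with powers of `T`
  have hcommPr : ∀ m : ℕ, T ^ m * Pr = Pr * T ^ m := by
    intro m
    have h := commute_circleIntegral_resolvent hr0 hres_r 0
    have hPr0 : Pr = ∮ z in C(0,r), (z : ℂ) ^ (0:ℤ) • resolvent T z := by
      rw [hPrdef]
      refine circleIntegral.integral_congr hr0.le fun z _ => ?_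
      simp
    rw [hPr0]
    exact (h.pow_left m).eq
  -- norm bound on `T ^ m * Pr`
  have hTPr : ∀ m : ℕ, ‖T ^ m * Pr‖ ≤ 2 * Real.pi * r * Mr * r ^ m := by
    intro m
    rw [hPrdef, pow_mul_circleIntegral_resolvent hr0 hres_r m]
    calc ‖∮ z in C(0,r), (z:ℂ) ^ (m:ℤ) • resolvent T z‖
        ≤ 2 * Real.pi * r * (r ^ (m:ℤ) * Mr) :=
          norm_circleIntegral_zpow_smul_resolvent_le hr0 hMr (m : ℤ)
      _ = 2 * Real.pi * r * Mr * r ^ m := by rw [zpow_natCast]; ring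
  -- every element of the J-set is killed by Pr
  have hker : ∀ y ∈ JSet T x, Pr y = 0 := by
    intro y hy
    obtain ⟨k, hk, u, hu, hTu⟩ := hy
    have hlim1 : Tendsto (fun n => Pr ((T ^ k n) (u n))) atTop (𝓝 (Pr y)) :=
      (Pr.continuous.tendsto y).comp hTu
    have hbound : ∀ n, ‖Pr ((T ^ k n) (u n))‖ ≤ 2 * Real.pi * r * Mr * r ^ k n * ‖u n‖ := by
      intro n
      have h1 : Pr ((T ^ k n) (u n)) = (T ^ k n * Pr) (u n) := by
        rw [hcommPr (k n)]; rfl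
      rw [h1]
      calc ‖(T ^ k n * Pr) (u n)‖ ≤ ‖T ^ k n * Pr‖ * ‖u n‖ :=
            ContinuousLinearMap.le_opNorm _ _
        _ ≤ 2 * Real.pi * r * Mr * r ^ k n * ‖u n‖ :=
            mul_le_mul_of_nonneg_right (hTPr (k n)) (norm_nonneg _)
    have hzero : Tendsto (fun n => 2 * Real.pi * r * Mr * r ^ k n * ‖u n‖) atTop (𝓝 0) := by
      have h1 : Tendsto (fun n => r ^ k n) atTop (𝓝 0) :=
        (tendsto_pow_atTop_nhds_zero_of_lt_one hr0.le hr1).comp hk.tendsto_atTop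
      have h2 : Tendsto (fun n => ‖u n‖) atTop (𝓝 ‖x‖) := hu.norm
      have h3 := (tendsto_const_nhds (x := (2 * Real.pi * r * Mr)) (f := atTop)).mul h1 |>.mul h2
      simpa using h3
    exact tendsto_nhds_unique hlim1 (squeeze_zero_norm hbound hzero)
  -- Pr = 0 since its kernel has nonempty interior
  have hPr0 : Pr = 0 := by
    have hsub : JSet T x ⊆ (LinearMap.ker (Pr : X →ₗ[ℂ] X) : Set X) := fun y hy => by
      simpa [LinearMap.mem_ker] using hker y hy
    have hint : (interior ((LinearMap.ker (Pr : X →ₗ[ℂ] X) : Submodule ℂ X) : Set X)).Nonempty :=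
      hx.mono (interior_mono hsub)
    have htop := Submodule.eq_top_of_nonempty_interior' _ hint
    ext v
    have hv : v ∈ LinearMap.ker (Pr : X →ₗ[ℂ] X) := htop ▸ Submodule.mem_top
    simpa using LinearMap.mem_ker.mp hv
  have hPs0 : Ps = 0 := hPrs.trans hPr0
  -- the outer contour integral forces x = 0
  obtain ⟨y₀, hy₀⟩ := hx
  obtain ⟨k, hk, u, hu, hTu⟩ := interior_subset hy₀
  set S : ℕ → (X →L[ℂ] X) := fun m => ∮ z in C(0, s), (z:ℂ) ^ (-(m:ℤ)) • resolvent T z with hSdef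
  have hS : ∀ m : ℕ, 0 < m →
      S m * T ^ m = -((2 * Real.pi * Complex.I) • (1 : X →L[ℂ] X)) := by
    intro m hm
    have h1 := pow_mul_circleIntegral_resolvent_neg hs0 hres_s hm
    rw [← hPsdef, hPs0, zero_sub] at h1
    have hc : Commute (T ^ m) (S m) :=
      ((commute_circleIntegral_resolvent hs0 hres_s (-(m:ℤ))).pow_left m)
    rw [← hc.eq]
    exact h1
  have hSnorm : ∀ m : ℕ, ‖S m‖ ≤ 2 * Real.pi * s * Ms * s⁻¹ ^ m := by
    intro m
    calc ‖S m‖ ≤ 2 * Real.pi * s * (s ^ (-(m:ℤ)) * Ms) :=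
          norm_circleIntegral_zpow_smul_resolvent_le hs0 hMs (-(m:ℤ))
      _ = 2 * Real.pi * s * Ms * s⁻¹ ^ m := by
          rw [zpow_neg, zpow_natCast, ← inv_pow]; ring
  have hlimS : Tendsto (fun n => (S (k n)) ((T ^ k n) (u n))) atTop (𝓝 0) := by
    refine squeeze_zero_norm
      (a := fun n => 2 * Real.pi * s * Ms * s⁻¹ ^ k n * ‖(T ^ k n) (u n)‖) (fun n => ?_) ?_
    · calc ‖(S (k n)) ((T ^ k n) (u n))‖ ≤ ‖S (k n)‖ * ‖(T ^ k n) (u n)‖ :=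
            ContinuousLinearMap.le_opNorm _ _
        _ ≤ 2 * Real.pi * s * Ms * s⁻¹ ^ k n * ‖(T ^ k n) (u n)‖ :=
            mul_le_mul_of_nonneg_right (hSnorm (k n)) (norm_nonneg _)
    · have h1 : Tendsto (fun n => s⁻¹ ^ k n) atTop (𝓝 0) :=
        (tendsto_pow_atTop_nhds_zero_of_lt_one (by positivity) (by
          rw [inv_lt_one_iff₀]; right; exact hs1)).comp hk.tendsto_atTop
      have h2 : Tendsto (fun n => ‖(T ^ k n) (u n)‖) atTop (𝓝 ‖y₀‖) := hTu.norm
      have h3 := (tendsto_const_nhds (x := (2 * Real.pi * s * Ms)) (f := atTop)).mul h1 |>.mul h2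
      simpa using h3
  have heq : ∀ n, 1 ≤ n →
      (S (k n)) ((T ^ k n) (u n)) = -((2 * Real.pi * Complex.I) • u n) := by
    intro n hn
    have hkn : 0 < k n := lt_of_lt_of_le hn hk.le_apply
    have h1 := hS (k n) hkn
    have h2 : (S (k n) * T ^ k n) (u n) = (S (k n)) ((T ^ k n) (u n)) := rfl
    rw [← h2, h1]
    simp
  have hlim2 : Tendsto (fun n => -((2 * Real.pi * Complex.I) • u n)) atTop
      (𝓝 (-((2 * Real.pi * Complex.I) • x))) := (hu.const_smul _).neg
  have hlim3 : Tendsto (fun n => -((2 * Real.pi * Complex.I) • u n)) atTop (𝓝 0) := by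
    refine hlimS.congr' ?_
    filter_upwards [eventually_ge_atTop 1] with n hn
    exact heq n hn
  have h0 : -((2 * Real.pi * Complex.I : ℂ) • x) = 0 := tendsto_nhds_unique hlim2 hlim3
  have h1 : (2 * Real.pi * Complex.I : ℂ) • x = 0 := by simpa using h0
  rcases smul_eq_zero.mp h1 with h | h
  · exact Complex.two_pi_I_ne_zero h
  · exact hx0 h

end JClassPaper
end
end

section
/- Let X be a complex Banach space with the property that every bounded linear operator T on X satisfies ∂σ(T) ⊆ σ_p(T*), i.e. every point of the topological boundary of the spectrum of T is an eigenvalue of the Banach-space adjoint T*. Then X contains no complemented infinite-dimensional separable closed subspace; that is, no infinite-dimensional separable closed subspace of X is the range of a bounded linear projection. -/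
open Filter Topology Metric
open scoped ENNReal

noncomputable section

namespace JClassPaper

variable {X : Type*} [NormedAddCommGroup X] [NormedSpace ℂ X]

-- ### Auxiliary development ###
set_option linter.unusedSectionVars false
set_option maxHeartbeats 1000000


/-- Hahn–Banach: a functional that is 1 at `v` and vanishes on a finite-dimensional
subspace not containing `v`. -/
lemma exists_functional_vanishing (S : Submodule ℂ X) [FiniteDimensional ℂ S] {v : X}
    (hv : v ∉ S) : ∃ g : X →L[ℂ] ℂ, g v = 1 ∧ ∀ s ∈ S, g s = 0 := by
  classical
  set S' : Submodule ℂ X := S ⊔ Submodule.span ℂ {v} with hS'def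
  haveI : FiniteDimensional ℂ S' := by
    have : FiniteDimensional ℂ (Submodule.span ℂ ({v} : Set X)) := inferInstance
    exact Submodule.finiteDimensional_sup S (Submodule.span ℂ {v})
  set p : Submodule ℂ S' := S.comap S'.subtype with hpdef
  have hvS' : v ∈ S' := le_sup_right (α := Submodule ℂ X)
    (Submodule.mem_span_singleton_self v)
  have hx : (⟨v, hvS'⟩ : S') ∉ p := by
    simpa [hpdef, Submodule.mem_comap] using hv
  obtain ⟨l, hl1, hl2⟩ := p.exists_dual_map_eq_bot_of_notMem hx inferInstance
  set l' : S' →ₗ[ℂ] ℂ := (l ⟨v, hvS'⟩)⁻¹ • l with hl'def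
  have hcont : Continuous l' := l'.continuous_of_finiteDimensional
  obtain ⟨g, hg, -⟩ := exists_extension_norm_eq S' ⟨l', hcont⟩
  refine ⟨g, ?_, ?_⟩
  · have := hg ⟨v, hvS'⟩
    simp only [ContinuousLinearMap.coe_mk'] at this
    rw [this]
    show l' ⟨v, hvS'⟩ = 1
    simp [hl'def, inv_mul_cancel₀ hl1]
  · intro s hs
    have hsS' : s ∈ S' := le_sup_left (α := Submodule ℂ X) hs
    have hls : l ⟨s, hsS'⟩ = 0 := by
      have hmem : (⟨s, hsS'⟩ : S') ∈ p := by simpa [hpdef] using hs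
      have : l ⟨s, hsS'⟩ ∈ Submodule.map l p := Submodule.mem_map_of_mem hmem
      rw [hl2] at this
      simpa using this
    have := hg ⟨s, hsS'⟩
    simp only [ContinuousLinearMap.coe_mk'] at this
    rw [this]
    show l' ⟨s, hsS'⟩ = 0
    simp [hl'def, hls]



/-- `GoodPair N x n prev p` : `p` is a valid `n`-th step of the biorthogonal construction. -/
def GoodPair (N : Submodule ℂ X) (x : ℕ → X) (n : ℕ) (prev : ℕ → X × (X →L[ℂ] ℂ))
    (p : X × (X →L[ℂ] ℂ)) : Prop :=
  p.1 ∈ N ∧ p.2 p.1 = 1 ∧ (∀ i, i < n → p.2 (prev i).1 = 0 ∧ (prev i).2 p.1 = 0) ∧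
    x n ∈ Submodule.span ℂ (insert p.1 ((fun i => (prev i).1) '' Set.Iio n))

open Classical in
/-- The recursively constructed biorthogonal sequence. -/
def bseq (N : Submodule ℂ X) (x : ℕ → X) : ℕ → X × (X →L[ℂ] ℂ) := fun n =>
  if h : ∃ p, GoodPair N x n (fun i => if _ : i < n then bseq N x i else (0, 0)) p then
    h.choose else (0, 0)
termination_by n => n

lemma goodPair_congr {N : Submodule ℂ X} {x : ℕ → X} {n : ℕ}
    {prev prev' : ℕ → X × (X →L[ℂ] ℂ)} (hp : ∀ i, i < n → prev i = prev' i)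
    {p : X × (X →L[ℂ] ℂ)} (hg : GoodPair N x n prev p) : GoodPair N x n prev' p := by
  obtain ⟨h1, h2, h3, h4⟩ := hg
  refine ⟨h1, h2, fun i hi => by rw [← hp i hi]; exact h3 i hi, ?_⟩
  have : ((fun i => (prev' i).1) '' Set.Iio n) = ((fun i => (prev i).1) '' Set.Iio n) :=
    Set.image_congr fun i hi => by rw [hp i hi]
  rw [this]; exact h4

/-- Existence of a good step, given biorthogonality so far. -/
lemma goodPair_exists {N : Submodule ℂ X} (hinf : ¬ FiniteDimensional ℂ N) {x : ℕ → X}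
    (hxN : ∀ n, x n ∈ N) (n : ℕ) (prev : ℕ → X × (X →L[ℂ] ℂ))
    (hmem : ∀ i, i < n → (prev i).1 ∈ N)
    (hbi1 : ∀ i, i < n → (prev i).2 (prev i).1 = 1)
    (hbi0 : ∀ i j, i < n → j < n → i ≠ j → (prev i).2 (prev j).1 = 0) :
    ∃ p, GoodPair N x n prev p := by
  classical
  set E : Set X := (fun i => (prev i).1) '' Set.Iio n with hEdef
  have hEfin : E.Finite := (Set.finite_Iio n).image _
  set S : Submodule ℂ X := Submodule.span ℂ E with hSdef
  haveI : FiniteDimensional ℂ S := FiniteDimensional.span_of_finite ℂ hEfin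
  have hw : ∃ w, w ∈ N ∧ w ∉ S := by
    by_contra hcon
    push_neg at hcon
    exact hinf (Submodule.finiteDimensional_of_le (fun y hy => hcon y hy))
  obtain ⟨w₀, hw₀N, hw₀S⟩ := hw
  set w : X := if x n ∈ S then w₀ else x n with hwdef
  have hwN : w ∈ N := by
    rw [hwdef]; split
    · exact hw₀N
    · exact hxN n
  have hwS : w ∉ S := by
    rw [hwdef]; split
    · exact hw₀S
    · assumption
  set σ : X := ∑ i ∈ Finset.range n, ((prev i).2 w) • (prev i).1 with hσdef
  have hσS : σ ∈ S := by
    refine Submodule.sum_mem _ fun i hi => Submodule.smul_mem _ _ (Submodule.subset_span ?_)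
    exact ⟨i, Finset.mem_range.mp hi, rfl⟩
  have hσN : σ ∈ N :=
    Submodule.sum_mem _ fun i hi => Submodule.smul_mem _ _ (hmem i (Finset.mem_range.mp hi))
  set v : X := w - σ with hvdef
  have hvS : v ∉ S := by
    intro hv
    exact hwS (by simpa [hvdef] using Submodule.add_mem S hv hσS)
  have hvN : v ∈ N := Submodule.sub_mem _ hwN hσN
  obtain ⟨g, hg1, hg0⟩ := exists_functional_vanishing S hvS
  have hfv : ∀ i, i < n → (prev i).2 v = 0 := by
    intro i hi
    have hsum : (prev i).2 σ = (prev i).2 w := by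
      rw [hσdef, map_sum]
      rw [Finset.sum_eq_single i]
      · rw [map_smul, hbi1 i hi]; simp
      · intro j hj hji
        rw [map_smul, hbi0 i j hi (Finset.mem_range.mp hj) (Ne.symm hji)]; simp
      · intro hni; exact absurd (Finset.mem_range.mpr hi) hni
    rw [hvdef, map_sub, hsum, sub_self]
  refine ⟨(v, g), hvN, hg1, ?_, ?_⟩
  · intro i hi
    exact ⟨hg0 _ (Submodule.subset_span ⟨i, hi, rfl⟩), hfv i hi⟩
  · show x n ∈ Submodule.span ℂ (insert v E)
    by_cases hxS : x n ∈ S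
    · exact Submodule.span_mono (Set.subset_insert _ _) hxS
    · have hw_eq : w = x n := by rw [hwdef, if_neg hxS]
      have hx_eq : x n = v + σ := by rw [hvdef, sub_add_cancel, hw_eq]
      rw [hx_eq]
      refine Submodule.add_mem _ (Submodule.subset_span (Set.mem_insert _ _)) ?_
      exact Submodule.span_mono (Set.subset_insert _ _) hσS

lemma bseq_good {N : Submodule ℂ X} (hinf : ¬ FiniteDimensional ℂ N) {x : ℕ → X}
    (hxN : ∀ n, x n ∈ N) : ∀ n, GoodPair N x n (bseq N x) (bseq N x n) := by
  intro n
  induction n using Nat.strong_induction_on with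
  | _ n IH =>
    classical
    set prev : ℕ → X × (X →L[ℂ] ℂ) := fun i => if _ : i < n then bseq N x i else (0, 0)
      with hprevdef
    have hagree : ∀ i, i < n → prev i = bseq N x i := fun i hi => dif_pos hi
    have hex : ∃ p, GoodPair N x n prev p := by
      refine goodPair_exists hinf hxN n prev ?_ ?_ ?_
      · intro i hi; rw [hagree i hi]; exact (IH i hi).1
      · intro i hi; rw [hagree i hi]; exact (IH i hi).2.1
      · intro i j hi hj hij
        rw [hagree i hi, hagree j hj]
        rcases Nat.lt_or_ge i j with h | h
        · exact ((IH j hj).2.2.1 i h).2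
        · have : j < i := lt_of_le_of_ne h (Ne.symm hij)
          exact ((IH i hi).2.2.1 j this).1
    have hval : bseq N x n = hex.choose := by
      conv_lhs => rw [bseq]
      rw [← hprevdef]
      rw [dif_pos hex]
    rw [hval]
    exact goodPair_congr hagree hex.choose_spec

/-- Main construction: a biorthogonal system with dense span in `N`. -/
lemma exists_biorth (N : Submodule ℂ X) (hsep : TopologicalSpace.IsSeparable (N : Set X))
    (hinf : ¬ FiniteDimensional ℂ N) :
    ∃ (e : ℕ → X) (f : ℕ → X →L[ℂ] ℂ),
      (∀ n, e n ∈ N) ∧ (∀ n, f n (e n) = 1) ∧ (∀ i j, i ≠ j → f i (e j) = 0) ∧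
      (N : Set X) ⊆ closure (Submodule.span ℂ (Set.range e) : Set X) := by
  haveI : TopologicalSpace.SeparableSpace (N : Set X) := hsep.separableSpace
  haveI : Nonempty (N : Set X) := ⟨⟨0, N.zero_mem⟩⟩
  obtain ⟨u, hu⟩ := TopologicalSpace.exists_dense_seq (N : Set X)
  set x : ℕ → X := fun n => (u n : X) with hxdef
  have hxN : ∀ n, x n ∈ N := fun n => (u n).2
  have hgood := bseq_good hinf hxN
  set e : ℕ → X := fun n => (bseq N x n).1 with hedef
  set f : ℕ → X →L[ℂ] ℂ := fun n => (bseq N x n).2 with hfdef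
  refine ⟨e, f, fun n => (hgood n).1, fun n => (hgood n).2.1, ?_, ?_⟩
  · intro i j hij
    rcases Nat.lt_or_ge i j with h | h
    · exact ((hgood j).2.2.1 i h).2
    · exact ((hgood i).2.2.1 j (lt_of_le_of_ne h (Ne.symm hij))).1
  · intro y hy
    have hxspan : ∀ n, x n ∈ Submodule.span ℂ (Set.range e) := by
      intro n
      refine Submodule.span_mono ?_ ((hgood n).2.2.2)
      intro z hz
      rcases Set.mem_insert_iff.mp hz with h | h
      · exact ⟨n, h.symm⟩
      · obtain ⟨i, -, hi⟩ := h
        exact ⟨i, hi⟩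
    have hyclos : (⟨y, hy⟩ : (N : Set X)) ∈ closure (Set.range u) := hu _
    have := map_mem_closure continuous_subtype_val hyclos
      (fun z hz => ?_ : Set.MapsTo _ (Set.range u) (Submodule.span ℂ (Set.range e) : Set X))
    · exact this
    · obtain ⟨n, hn⟩ := hz
      show (z : X) ∈ Submodule.span ℂ (Set.range e)
      rw [← hn]
      exact hxspan n


section Ops

variable (P : X →L[ℂ] X) (e : ℕ → X) (f : ℕ → X →L[ℂ] ℂ)

/-- The functionals composed with the projection. -/
def Fop (n : ℕ) : X →L[ℂ] ℂ := (f n).comp P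

/-- The weights of the shift operator. -/
def cw (n : ℕ) : ℝ :=
  (1/2 : ℝ) ^ (2*n+2) / ((1 + ‖e n‖) * (1 + ‖Fop P f (n+1)‖))

lemma cw_pos (n : ℕ) : 0 < cw P e f n := by
  have h1 : (0:ℝ) < 1 + ‖e n‖ := by positivity
  have h2 : (0:ℝ) < 1 + ‖Fop P f (n+1)‖ := by positivity
  have : (0:ℝ) < (1/2 : ℝ) ^ (2*n+2) := by positivity
  exact div_pos this (mul_pos h1 h2)

/-- Partial products of the weights. -/
def Pic (k n : ℕ) : ℂ := ∏ j ∈ Finset.range k, ((cw P e f (n+j) : ℝ) : ℂ)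

variable [CompleteSpace X]

/-- The rank-one summands of the shift operator. -/
def Gop (n : ℕ) : X →L[ℂ] X :=
  ((cw P e f n : ℝ) : ℂ) • (Fop P f (n+1)).smulRight (e n)

/-- The quasinilpotent weighted shift. -/
def Bop : X →L[ℂ] X := ∑' n, Gop P e f n

/-- The operator `T = P + B`. -/
def Top : X →L[ℂ] X := P + Bop P e f

/-- The `k`-th power candidates. -/
def Dop (k : ℕ) : X →L[ℂ] X := ∑' n, Pic P e f k n • (Fop P f (n+k)).smulRight (e n)

lemma pic_prod_bound {k : ℕ} (hk : 1 ≤ k) (n : ℕ) :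
    (∏ j ∈ Finset.range k, cw P e f (n+j)) ≤
      (∏ j ∈ Finset.range k, (1/2 : ℝ) ^ (2*(n+j)+2)) *
        ((1 + ‖e n‖)⁻¹ * (1 + ‖Fop P f (n+k)‖)⁻¹) := by
  induction k, hk using Nat.le_induction with
  | base =>
    simp only [Finset.prod_range_one, Nat.add_zero]
    rw [cw, div_eq_mul_inv, mul_inv]
  | succ k hk IH =>
    rw [Finset.prod_range_succ, Finset.prod_range_succ (fun j => (1/2:ℝ)^(2*(n+j)+2))]
    have hcw : cw P e f (n+k) ≤ (1/2:ℝ)^(2*(n+k)+2) * (1 + ‖Fop P f (n+k+1)‖)⁻¹ := by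
      rw [cw, div_eq_mul_inv, mul_inv]
      have h1 : (1 + ‖e (n+k)‖)⁻¹ ≤ 1 := by
        rw [inv_le_one_iff₀]; right; linarith [norm_nonneg (e (n+k))]
      have h2 : (0:ℝ) ≤ (1 + ‖Fop P f (n+k+1)‖)⁻¹ := by positivity
      have h3 : (0:ℝ) ≤ (1/2:ℝ)^(2*(n+k)+2) := by positivity
      calc (1/2:ℝ)^(2*(n+k)+2) * ((1 + ‖e (n+k)‖)⁻¹ * (1 + ‖Fop P f (n+k+1)‖)⁻¹)
          ≤ (1/2:ℝ)^(2*(n+k)+2) * (1 * (1 + ‖Fop P f (n+k+1)‖)⁻¹) := by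
            gcongr
        _ = (1/2:ℝ)^(2*(n+k)+2) * (1 + ‖Fop P f (n+k+1)‖)⁻¹ := by rw [one_mul]
    have hprodpos : 0 ≤ ∏ j ∈ Finset.range k, cw P e f (n+j) :=
      Finset.prod_nonneg fun j _ => (cw_pos P e f (n+j)).le
    calc (∏ j ∈ Finset.range k, cw P e f (n+j)) * cw P e f (n+k)
        ≤ ((∏ j ∈ Finset.range k, (1/2 : ℝ) ^ (2*(n+j)+2)) *
            ((1 + ‖e n‖)⁻¹ * (1 + ‖Fop P f (n+k)‖)⁻¹)) *
          ((1/2:ℝ)^(2*(n+k)+2) * (1 + ‖Fop P f (n+k+1)‖)⁻¹) := by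
          exact mul_le_mul IH hcw (cw_pos P e f (n+k)).le (by positivity)
      _ = ((∏ j ∈ Finset.range k, (1/2 : ℝ) ^ (2*(n+j)+2)) * (1/2:ℝ)^(2*(n+k)+2)) *
            ((1 + ‖e n‖)⁻¹ * (1 + ‖Fop P f (n+k+1)‖)⁻¹) * (1 + ‖Fop P f (n+k)‖)⁻¹ := by
          ring
      _ ≤ ((∏ j ∈ Finset.range k, (1/2 : ℝ) ^ (2*(n+j)+2)) * (1/2:ℝ)^(2*(n+k)+2)) *
            ((1 + ‖e n‖)⁻¹ * (1 + ‖Fop P f (n+k+1)‖)⁻¹) * 1 := by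
          refine mul_le_mul_of_nonneg_left ?_ (by positivity)
          rw [inv_le_one_iff₀]; right; linarith [norm_nonneg (Fop P f (n+k))]
      _ = ((∏ j ∈ Finset.range k, (1/2 : ℝ) ^ (2*(n+j)+2)) * (1/2:ℝ)^(2*(n+k)+2)) *
            ((1 + ‖e n‖)⁻¹ * (1 + ‖Fop P f (n+k+1)‖)⁻¹) := by rw [mul_one]

lemma exp_sum_bound {k : ℕ} (hk : 1 ≤ k) (n : ℕ) :
    n + k*k ≤ ∑ j ∈ Finset.range k, (2*(n+j)+2) := by
  induction k, hk using Nat.le_induction with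
  | base => simp; omega
  | succ k hk IH =>
    rw [Finset.sum_range_succ]
    have : (k+1)*(k+1) = k*k + 2*k + 1 := by ring
    omega

lemma q_prod_bound {k : ℕ} (hk : 1 ≤ k) (n : ℕ) :
    (∏ j ∈ Finset.range k, (1/2 : ℝ) ^ (2*(n+j)+2)) ≤ (1/2 : ℝ) ^ (n + k*k) := by
  rw [Finset.prod_pow_eq_pow_sum]
  exact pow_le_pow_of_le_one (by norm_num) (by norm_num) (exp_sum_bound hk n)

lemma pic_norm_bound {k : ℕ} (hk : 1 ≤ k) (n : ℕ) :
    ‖Pic P e f k n‖ * (‖Fop P f (n+k)‖ * ‖e n‖) ≤ (1/2 : ℝ) ^ (n + k*k) := by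
  have hnorm : ‖Pic P e f k n‖ = ∏ j ∈ Finset.range k, cw P e f (n+j) := by
    rw [Pic, norm_prod]
    refine Finset.prod_congr rfl fun j _ => ?_
    rw [Complex.norm_real, Real.norm_eq_abs, abs_of_pos (cw_pos P e f (n+j))]
  rw [hnorm]
  have h1 := pic_prod_bound P e f hk n
  have h2 : (‖Fop P f (n+k)‖ * ‖e n‖) *
      ((1 + ‖e n‖)⁻¹ * (1 + ‖Fop P f (n+k)‖)⁻¹) ≤ 1 := by
    have he : ‖e n‖ * (1 + ‖e n‖)⁻¹ ≤ 1 := by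
      rw [← div_eq_mul_inv, div_le_one (by positivity)]; linarith [norm_nonneg (e n)]
    have hf : ‖Fop P f (n+k)‖ * (1 + ‖Fop P f (n+k)‖)⁻¹ ≤ 1 := by
      rw [← div_eq_mul_inv, div_le_one (by positivity)]
      linarith [norm_nonneg (Fop P f (n+k))]
    calc (‖Fop P f (n+k)‖ * ‖e n‖) * ((1 + ‖e n‖)⁻¹ * (1 + ‖Fop P f (n+k)‖)⁻¹)
        = (‖e n‖ * (1 + ‖e n‖)⁻¹) * (‖Fop P f (n+k)‖ * (1 + ‖Fop P f (n+k)‖)⁻¹) := by ring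
      _ ≤ 1 * 1 := mul_le_mul he hf (by positivity) (by positivity)
      _ = 1 := by norm_num
  calc (∏ j ∈ Finset.range k, cw P e f (n+j)) * (‖Fop P f (n+k)‖ * ‖e n‖)
      ≤ ((∏ j ∈ Finset.range k, (1/2 : ℝ) ^ (2*(n+j)+2)) *
          ((1 + ‖e n‖)⁻¹ * (1 + ‖Fop P f (n+k)‖)⁻¹)) * (‖Fop P f (n+k)‖ * ‖e n‖) :=
        mul_le_mul_of_nonneg_right h1 (by positivity)
    _ = (∏ j ∈ Finset.range k, (1/2 : ℝ) ^ (2*(n+j)+2)) *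
          ((‖Fop P f (n+k)‖ * ‖e n‖) * ((1 + ‖e n‖)⁻¹ * (1 + ‖Fop P f (n+k)‖)⁻¹)) := by ring
    _ ≤ (∏ j ∈ Finset.range k, (1/2 : ℝ) ^ (2*(n+j)+2)) * 1 := by
        refine mul_le_mul_of_nonneg_left h2 ?_
        positivity
    _ = ∏ j ∈ Finset.range k, (1/2 : ℝ) ^ (2*(n+j)+2) := by rw [mul_one]
    _ ≤ (1/2 : ℝ) ^ (n + k*k) := q_prod_bound hk n

lemma norm_D_term_le {k : ℕ} (hk : 1 ≤ k) (n : ℕ) :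
    ‖Pic P e f k n • (Fop P f (n+k)).smulRight (e n)‖ ≤ (1/2 : ℝ) ^ (n + k*k) := by
  calc ‖Pic P e f k n • (Fop P f (n+k)).smulRight (e n)‖
      = ‖Pic P e f k n‖ * ‖(Fop P f (n+k)).smulRight (e n)‖ := norm_smul (Pic P e f k n) ((Fop P f (n+k)).smulRight (e n))
    _ = ‖Pic P e f k n‖ * (‖Fop P f (n+k)‖ * ‖e n‖) := by
        rw [ContinuousLinearMap.norm_smulRight_apply]
    _ ≤ (1/2 : ℝ) ^ (n + k*k) := pic_norm_bound P e f hk n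

lemma summable_half_shift (m : ℕ) : Summable (fun n : ℕ => (1/2 : ℝ) ^ (n + m)) := by
  have : Summable (fun n : ℕ => (1/2 : ℝ) ^ n) :=
    summable_geometric_of_lt_one (by norm_num) (by norm_num)
  simpa [pow_add] using this.mul_right ((1/2 : ℝ) ^ m)

lemma summable_D_terms {k : ℕ} (hk : 1 ≤ k) :
    Summable (fun n => Pic P e f k n • (Fop P f (n+k)).smulRight (e n)) :=
  Summable.of_norm_bounded (summable_half_shift (k*k)) (norm_D_term_le P e f hk)

lemma hasSum_Dop_apply {k : ℕ} (hk : 1 ≤ k) (x : X) :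
    HasSum (fun n => (Pic P e f k n * Fop P f (n+k) x) • e n) (Dop P e f k x) := by
  have h := ((summable_D_terms P e f hk).hasSum)
  have h2 := (ContinuousLinearMap.apply ℂ X x).hasSum h
  simp only [ContinuousLinearMap.apply_apply, ContinuousLinearMap.smul_apply,
    ContinuousLinearMap.smulRight_apply, smul_smul] at h2
  exact h2

lemma norm_Dop_le {k : ℕ} (hk : 1 ≤ k) : ‖Dop P e f k‖ ≤ 2 * (1/2 : ℝ) ^ (k*k) := by
  have hsn : Summable (fun n => ‖Pic P e f k n • (Fop P f (n+k)).smulRight (e n)‖) :=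
    Summable.of_nonneg_of_le (fun n => norm_nonneg _) (norm_D_term_le P e f hk)
      (summable_half_shift (k*k))
  calc ‖Dop P e f k‖ ≤ ∑' n, ‖Pic P e f k n • (Fop P f (n+k)).smulRight (e n)‖ :=
        norm_tsum_le_tsum_norm hsn
    _ ≤ ∑' n, (1/2 : ℝ) ^ (n + k*k) :=
        Summable.tsum_le_tsum (norm_D_term_le P e f hk) hsn (summable_half_shift (k*k))
    _ = 2 * (1/2 : ℝ) ^ (k*k) := by
        simp only [pow_add]
        rw [tsum_mul_right, tsum_geometric_two]

lemma Bop_eq_Dop_one : Bop P e f = Dop P e f 1 := by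
  rw [Bop, Dop]
  refine tsum_congr fun n => ?_
  rw [Gop, Pic, Finset.prod_range_one]
  norm_num

lemma hasSum_Bop_apply (x : X) :
    HasSum (fun n => (((cw P e f n : ℝ) : ℂ) * Fop P f (n+1) x) • e n) (Bop P e f x) := by
  have h := hasSum_Dop_apply P e f le_rfl x
  rw [← Bop_eq_Dop_one] at h
  simpa only [Pic, Finset.prod_range_one, Nat.add_zero] using h

section Hyps

variable (hPP : ∀ y, P (P y) = P y) (hPe : ∀ n, P (e n) = e n)
  (hfe1 : ∀ n, f n (e n) = 1) (hfe0 : ∀ i j, i ≠ j → f i (e j) = 0)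

include hPP hPe hfe1 hfe0

lemma Fop_e (m l : ℕ) : Fop P f m (e l) = f m (e l) := by
  rw [Fop, ContinuousLinearMap.comp_apply, hPe l]

lemma Fop_P (m : ℕ) (x : X) : Fop P f m (P x) = Fop P f m x := by
  rw [Fop, ContinuousLinearMap.comp_apply, ContinuousLinearMap.comp_apply, hPP x]

lemma Bop_P (x : X) : Bop P e f (P x) = Bop P e f x := by
  have h := hasSum_Bop_apply P e f (P x)
  have h2 : ∀ n, (((cw P e f n : ℝ) : ℂ) * Fop P f (n+1) (P x)) • e n =
      (((cw P e f n : ℝ) : ℂ) * Fop P f (n+1) x) • e n := by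
    intro n
    rw [Fop_P P e f hPP hPe hfe1 hfe0]
  rw [funext h2] at h
  exact h.unique (hasSum_Bop_apply P e f x)

lemma P_Bop (x : X) : P (Bop P e f x) = Bop P e f x := by
  have h := P.hasSum (hasSum_Bop_apply P e f x)
  have h2 : ∀ n, P ((((cw P e f n : ℝ) : ℂ) * Fop P f (n+1) x) • e n) =
      (((cw P e f n : ℝ) : ℂ) * Fop P f (n+1) x) • e n := by
    intro n
    rw [map_smul, hPe n]
  rw [funext h2] at h
  exact h.unique (hasSum_Bop_apply P e f x)

lemma Fop_Bop (m : ℕ) (x : X) :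
    Fop P f m (Bop P e f x) = ((cw P e f m : ℝ) : ℂ) * Fop P f (m+1) x := by
  have h := (Fop P f m).hasSum (hasSum_Bop_apply P e f x)
  have h2 : ∀ n, (Fop P f m) ((((cw P e f n : ℝ) : ℂ) * Fop P f (n+1) x) • e n) =
      if n = m then ((cw P e f m : ℝ) : ℂ) * Fop P f (m+1) x else 0 := by
    intro n
    rw [map_smul, Fop_e P e f hPP hPe hfe1 hfe0]
    by_cases hnm : n = m
    · subst hnm
      rw [if_pos rfl, hfe1 n, smul_eq_mul, mul_one]
    · rw [if_neg hnm, hfe0 m n (fun h => hnm h.symm), smul_eq_mul, mul_zero]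
  rw [funext h2] at h
  have h3 : HasSum (fun n => if n = m then ((cw P e f m : ℝ) : ℂ) * Fop P f (m+1) x else 0)
      (((cw P e f m : ℝ) : ℂ) * Fop P f (m+1) x) := by
    have := hasSum_single (f := fun n =>
      if n = m then ((cw P e f m : ℝ) : ℂ) * Fop P f (m+1) x else 0) m
      (fun b hb => if_neg hb)
    simpa using this
  exact h.unique h3

lemma Bop_e_zero : Bop P e f (e 0) = 0 := by
  have h := hasSum_Bop_apply P e f (e 0)
  have h2 : ∀ n, ((((cw P e f n : ℝ) : ℂ) * Fop P f (n+1) (e 0)) • e n) = 0 := by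
    intro n
    rw [Fop_e P e f hPP hPe hfe1 hfe0, hfe0 (n+1) 0 (Nat.succ_ne_zero n), mul_zero, zero_smul]
  rw [funext h2] at h
  exact h.unique hasSum_zero

lemma Bop_e_succ (m : ℕ) : Bop P e f (e (m+1)) = ((cw P e f m : ℝ) : ℂ) • e m := by
  have h := hasSum_Bop_apply P e f (e (m+1))
  have h2 : ∀ n, ((((cw P e f n : ℝ) : ℂ) * Fop P f (n+1) (e (m+1))) • e n) =
      if n = m then ((cw P e f m : ℝ) : ℂ) • e m else 0 := by
    intro n
    rw [Fop_e P e f hPP hPe hfe1 hfe0]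
    by_cases hnm : n = m
    · subst hnm
      rw [if_pos rfl, hfe1 (n+1), mul_one]
    · rw [if_neg hnm, hfe0 (n+1) (m+1) (fun hc => hnm (Nat.succ_injective hc)), mul_zero,
        zero_smul]
  rw [funext h2] at h
  have h3 : HasSum (fun n => if n = m then ((cw P e f m : ℝ) : ℂ) • e m else 0)
      (((cw P e f m : ℝ) : ℂ) • e m) := by
    have := hasSum_single (f := fun n =>
      if n = m then ((cw P e f m : ℝ) : ℂ) • e m else 0) m (fun b hb => if_neg hb)
    simpa using this
  exact h.unique h3

lemma Dop_Bop {k : ℕ} (hk : 1 ≤ k) (x : X) :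
    Dop P e f k (Bop P e f x) = Dop P e f (k+1) x := by
  have h := hasSum_Dop_apply P e f hk (Bop P e f x)
  have h2 : ∀ n, (Pic P e f k n * Fop P f (n+k) (Bop P e f x)) • e n =
      (Pic P e f (k+1) n * Fop P f (n+(k+1)) x) • e n := by
    intro n
    rw [Fop_Bop P e f hPP hPe hfe1 hfe0]
    have hp : Pic P e f (k+1) n = Pic P e f k n * ((cw P e f (n+k) : ℝ) : ℂ) := by
      rw [Pic, Pic, Finset.prod_range_succ]
    have harg : n + (k+1) = n + k + 1 := by omega
    rw [hp, harg, mul_assoc]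
  rw [funext h2] at h
  exact h.unique (hasSum_Dop_apply P e f (le_trans hk (Nat.le_succ k)) x)

lemma Bop_pow (k : ℕ) : Bop P e f ^ (k+1) = Dop P e f (k+1) := by
  induction k with
  | zero => rw [pow_one, Bop_eq_Dop_one]
  | succ k IH =>
    rw [pow_succ, IH]
    ext x
    rw [ContinuousLinearMap.mul_apply]
    exact Dop_Bop P e f hPP hPe hfe1 hfe0 (Nat.succ_le_succ (Nat.zero_le k)) x

lemma norm_Bop_pow (k : ℕ) :
    ‖Bop P e f ^ (k+1)‖ ≤ 2 * (1/2 : ℝ) ^ ((k+1)*(k+1)) := by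
  rw [Bop_pow P e f hPP hPe hfe1 hfe0]
  exact norm_Dop_le P e f (Nat.succ_le_succ (Nat.zero_le k))

lemma spec_Bop (he0 : e 0 ≠ 0) : spectrum ℂ (Bop P e f) ⊆ {0} := by
  haveI : Nontrivial X := ⟨⟨e 0, 0, he0⟩⟩
  intro z hz
  simp only [Set.mem_singleton_iff]
  by_contra h0
  have hzpos : 0 < ‖z‖ := norm_pos_iff.mpr h0
  obtain ⟨m, hm⟩ := pow_unbounded_of_one_lt (4/‖z‖) (one_lt_two (α := ℝ))
  set K := m + 1 with hK
  have hm2 : 4/‖z‖ < 2^K := lt_of_lt_of_le hm (pow_le_pow_right₀ one_le_two (Nat.le_succ m))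
  have h4 : 4 < ‖z‖ * 2^K := by
    rw [div_lt_iff₀ hzpos] at hm2
    linarith [hm2]
  have hzK : ‖z‖^K ≤ 2 * (1/2 : ℝ)^(K*K) := by
    have hmem : z^K ∈ spectrum ℂ (Bop P e f ^ K) :=
      spectrum.pow_image_subset (Bop P e f) K ⟨z, hz, rfl⟩
    have hle := spectrum.norm_le_norm_of_mem hmem
    rw [norm_pow] at hle
    exact le_trans hle (norm_Bop_pow P e f hPP hPe hfe1 hfe0 m)
  have hKK : (‖z‖ * 2^K)^K ≤ 2 := by
    have : (‖z‖ * 2^K)^K = ‖z‖^K * 2^(K*K) := by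
      rw [mul_pow, ← pow_mul]
    rw [this]
    calc ‖z‖^K * 2^(K*K) ≤ (2 * (1/2 : ℝ)^(K*K)) * 2^(K*K) :=
          mul_le_mul_of_nonneg_right hzK (by positivity)
      _ = 2 * ((1/2 : ℝ) * 2)^(K*K) := by rw [mul_pow]; ring
      _ = 2 := by norm_num
  have hge : ‖z‖ * 2^K ≤ (‖z‖ * 2^K)^K := by
    refine le_self_pow₀ ?_ (Nat.succ_ne_zero m)
    linarith
  linarith

lemma PP_mul : P * P = P := by
  ext x; rw [ContinuousLinearMap.mul_apply, hPP x]

lemma BP_mul : Bop P e f * P = Bop P e f := by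
  ext x
  rw [ContinuousLinearMap.mul_apply, Bop_P P e f hPP hPe hfe1 hfe0]

lemma PB_mul : P * Bop P e f = Bop P e f := by
  ext x
  rw [ContinuousLinearMap.mul_apply, P_Bop P e f hPP hPe hfe1 hfe0]

lemma isUnit_Top (he0 : e 0 ≠ 0) {z : ℂ} (hz0 : z ≠ 0) (hz1 : z ≠ 1) :
    IsUnit (algebraMap ℂ (X →L[ℂ] X) z - Top P e f) := by
  set A : X →L[ℂ] X := algebraMap ℂ (X →L[ℂ] X) z with hA
  set Ai : X →L[ℂ] X := algebraMap ℂ (X →L[ℂ] X) z⁻¹ with hAi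
  set B : X →L[ℂ] X := Bop P e f with hB
  have hw : z - 1 ≠ 0 := sub_ne_zero.mpr hz1
  have hns : (z - 1) ∉ spectrum ℂ B := by
    intro hmem
    exact hw (spec_Bop P e f hPP hPe hfe1 hfe0 he0 hmem)
  have hUnit : IsUnit (algebraMap ℂ (X →L[ℂ] X) (z-1) - B) := spectrum.notMem_iff.mp hns
  set W : X →L[ℂ] X := algebraMap ℂ (X →L[ℂ] X) (z-1) - B with hW
  set Ci : X →L[ℂ] X := ↑hUnit.unit⁻¹ with hCi
  have hWCi : W * Ci = 1 := by
    have h := hUnit.unit.mul_inv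
    rwa [hUnit.unit_spec] at h
  have hCiW : Ci * W = 1 := by
    have h := hUnit.unit.inv_mul
    rwa [hUnit.unit_spec] at h
  have hWP : W * P = P * W := by
    rw [hW, sub_mul, mul_sub, Algebra.commutes, BP_mul P e f hPP hPe hfe1 hfe0,
      PB_mul P e f hPP hPe hfe1 hfe0]
  have hcomm : Ci * P = P * Ci := by
    have h1 : Commute (↑hUnit.unit : X →L[ℂ] X) P := by
      rw [hUnit.unit_spec]; exact hWP
    exact h1.units_inv_left
  have hAAi : A * Ai = 1 := by
    rw [hA, hAi, ← map_mul, mul_inv_cancel₀ hz0, map_one]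
  have hAiA : Ai * A = 1 := by
    rw [hA, hAi, ← map_mul, inv_mul_cancel₀ hz0, map_one]
  set u : X →L[ℂ] X := A - Top P e f with hu
  have hu2 : u = A - P - B := by rw [hu, Top, hB]; abel
  have hu3 : u = W + (1 - P) := by
    rw [hu2, hW, map_sub, map_one]; abel
  set R : X →L[ℂ] X := Ai * (1 - P) + Ci * P with hR
  have huP : u * P = A * P - P - B := by
    rw [hu2, sub_mul, sub_mul, PP_mul P e f hPP hPe hfe1 hfe0,
      BP_mul P e f hPP hPe hfe1 hfe0]
  have hPu : P * u = A * P - P - B := by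
    rw [hu2, mul_sub, mul_sub, PP_mul P e f hPP hPe hfe1 hfe0,
      PB_mul P e f hPP hPe hfe1 hfe0, ← Algebra.commutes z P]
  have key1 : u * (Ai * (1 - P)) = 1 - P := by
    have hcA : u * Ai = Ai * u := (Algebra.commutes z⁻¹ u).symm
    rw [← mul_assoc, hcA, mul_assoc]
    have : u * (1 - P) = A * (1 - P) := by
      rw [mul_sub, mul_one, huP, mul_sub, mul_one, hu2]
      abel
    rw [this, ← mul_assoc, hAiA, one_mul]
  have key2 : u * (Ci * P) = P := by
    rw [hu3, add_mul, ← mul_assoc, hWCi, one_mul]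
    have : (1 - P) * (Ci * P) = 0 := by
      rw [sub_mul, one_mul, ← mul_assoc, ← hcomm, mul_assoc,
        PP_mul P e f hPP hPe hfe1 hfe0, sub_self]
    rw [this, add_zero]
  have key3 : (Ai * (1 - P)) * u = 1 - P := by
    have hcA : Ai * u = u * Ai := Algebra.commutes z⁻¹ u
    rw [mul_assoc]
    have : (1 - P) * u = A * (1 - P) := by
      rw [sub_mul, one_mul, hPu, mul_sub, mul_one, hu2]
      abel
    rw [this, ← mul_assoc, hAiA, one_mul]
  have key4 : (Ci * P) * u = P := by
    rw [hu3, mul_add]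
    have h1 : (Ci * P) * W = P := by
      have hPW : P * W = W * P := hWP.symm
      rw [mul_assoc, hPW, ← mul_assoc, hCiW, one_mul]
    have h2 : (Ci * P) * (1 - P) = 0 := by
      rw [mul_sub, mul_one, mul_assoc, PP_mul P e f hPP hPe hfe1 hfe0, sub_self]
    rw [h1, h2, add_zero]
  have huR : u * R = 1 := by
    rw [hR, mul_add, key1, key2]
    abel
  have hRu : R * u = 1 := by
    rw [hR, add_mul, key3, key4]
    abel
  exact ⟨⟨u, R, huR, hRu⟩, rfl⟩

lemma spec_Top (he0 : e 0 ≠ 0) : spectrum ℂ (Top P e f) ⊆ {0, 1} := by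
  intro z hz
  by_contra hznot
  simp only [Set.mem_insert_iff, Set.mem_singleton_iff, not_or] at hznot
  rw [spectrum.mem_iff] at hz
  exact hz (isUnit_Top P e f hPP hPe hfe1 hfe0 he0 hznot.1 hznot.2)

lemma one_mem_spec_Top (he0 : e 0 ≠ 0) : (1 : ℂ) ∈ spectrum ℂ (Top P e f) := by
  rw [spectrum.mem_iff]
  intro hu
  have hker : (algebraMap ℂ (X →L[ℂ] X) 1 - Top P e f) (e 0) = 0 := by
    rw [map_one]
    have : ((1 : X →L[ℂ] X) - Top P e f) (e 0) = e 0 - (P (e 0) + Bop P e f (e 0)) := rfl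
    rw [ContinuousLinearMap.sub_apply]
    have hT : Top P e f (e 0) = e 0 := by
      rw [Top, ContinuousLinearMap.add_apply, hPe 0,
        Bop_e_zero P e f hPP hPe hfe1 hfe0, add_zero]
    rw [hT]
    simp
  have he0' : e 0 = 0 := by
    have h1 : (↑hu.unit⁻¹ * ↑hu.unit : X →L[ℂ] X) (e 0) = e 0 := by
      rw [hu.unit.inv_mul]; simp
    rw [ContinuousLinearMap.mul_apply, hu.unit_spec, hker, map_zero] at h1
    exact h1.symm
  exact he0 he0'

lemma one_mem_frontier_spec_Top (he0 : e 0 ≠ 0) :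
    (1 : ℂ) ∈ frontier (spectrum ℂ (Top P e f)) := by
  rw [frontier]
  refine Set.mem_diff_of_mem (subset_closure (one_mem_spec_Top P e f hPP hPe hfe1 hfe0 he0)) ?_
  intro hint
  rw [mem_interior_iff_mem_nhds, Metric.mem_nhds_iff] at hint
  obtain ⟨ε, hε, hball⟩ := hint
  set δ : ℝ := min ε 1 with hδ
  have hδpos : 0 < δ := lt_min hε one_pos
  set ζ : ℂ := 1 + ((δ/2 : ℝ) : ℂ) with hζ
  have hζmem : ζ ∈ Metric.ball (1:ℂ) ε := by
    rw [Metric.mem_ball, dist_eq_norm]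
    have : ζ - 1 = ((δ/2 : ℝ) : ℂ) := by rw [hζ]; ring
    rw [this, Complex.norm_real, Real.norm_eq_abs, abs_of_pos (by linarith)]
    have : δ ≤ ε := min_le_left _ _
    linarith
  have := spec_Top P e f hPP hPe hfe1 hfe0 he0 (hball hζmem)
  rcases this with h | h
  · have : (1 : ℝ) + δ/2 = 0 := by
      have := congrArg Complex.re h
      simpa [hζ] using this
    linarith
  · have : (δ : ℝ)/2 = 0 := by
      have := congrArg Complex.re h
      simpa [hζ] using this
    linarith

end Hyps

end Ops

/-- If every bounded operator `T` on the complex Banach space `X` satisfies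
`∂σ(T) ⊆ σ_p(T*)`, then no infinite-dimensional separable closed subspace of `X` is
complemented (i.e. the range of a bounded projection). -/
theorem stmt8 {X : Type*} [NormedAddCommGroup X] [NormedSpace ℂ X] [CompleteSpace X]
    (h : ∀ T : X →L[ℂ] X, frontier (spectrum ℂ T) ⊆ pointSpectrum (adj T))
    (N : Submodule ℂ X) (hclosed : IsClosed (N : Set X))
    (hsep : TopologicalSpace.IsSeparable (N : Set X))
    (hinf : ¬ FiniteDimensional ℂ N) :
    ¬ Submodule.ClosedComplemented N := by
  intro hcompl
  obtain ⟨pi, hpi⟩ := hcompl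
  set P : X →L[ℂ] X := N.subtypeL.comp pi with hPdef
  have hPmem : ∀ x : X, P x ∈ N := fun x => (pi x).2
  have hPN : ∀ y, y ∈ N → P y = y := by
    intro y hy
    show (↑(pi y) : X) = y
    rw [show pi y = pi ↑(⟨y, hy⟩ : N) from rfl, hpi ⟨y, hy⟩]
  obtain ⟨e, f, heN, hfe1, hfe0, hdense⟩ := exists_biorth N hsep hinf
  have hPP : ∀ y, P (P y) = P y := fun y => hPN _ (hPmem y)
  have hPe : ∀ n, P (e n) = e n := fun n => hPN _ (heN n)
  have he0 : e 0 ≠ 0 := by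
    intro h0
    have h1 := hfe1 0
    rw [h0, map_zero] at h1
    exact zero_ne_one (α := ℂ) h1
  have h1f := one_mem_frontier_spec_Top P e f hPP hPe hfe1 hfe0 he0
  have hpt := h (Top P e f) h1f
  simp only [pointSpectrum, Set.mem_setOf_eq] at hpt
  obtain ⟨φ, hφne, hφeq⟩ := hpt
  have hφT : ∀ x, φ (Top P e f x) = φ x := by
    intro x
    have h1 : adj (Top P e f) φ x = ((1:ℂ) • φ) x := by rw [hφeq]
    have h2 : adj (Top P e f) φ x = φ (Top P e f x) := rfl
    rw [h2] at h1
    simpa using h1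
  have hφe : ∀ m, φ (e m) = 0 := by
    intro m
    have hx := hφT (e (m+1))
    rw [Top, ContinuousLinearMap.add_apply, hPe (m+1),
      Bop_e_succ P e f hPP hPe hfe1 hfe0 m, map_add] at hx
    have hb : φ (((cw P e f m : ℝ) : ℂ) • e m) = 0 := by
      have := hx
      rwa [add_eq_left] at this
    rw [map_smul, smul_eq_mul] at hb
    rcases mul_eq_zero.mp hb with hc | hφ0
    · exact absurd hc (Complex.ofReal_ne_zero.mpr (cw_pos P e f m).ne')
    · exact hφ0
  have hφB : ∀ x, φ (Bop P e f x) = 0 := by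
    intro x
    have hsum := φ.hasSum (hasSum_Bop_apply P e f x)
    have h2 : ∀ n, φ ((((cw P e f n : ℝ) : ℂ) * Fop P f (n+1) x) • e n) = 0 := by
      intro n
      rw [map_smul, hφe n, smul_zero]
    rw [funext h2] at hsum
    exact hsum.unique hasSum_zero
  have hφN : ∀ y ∈ N, φ y = 0 := by
    intro y hy
    have hle : Submodule.span ℂ (Set.range e) ≤ LinearMap.ker (φ : X →ₗ[ℂ] ℂ) := by
      rw [Submodule.span_le]
      rintro - ⟨n, rfl⟩
      exact LinearMap.mem_ker.mpr (hφe n)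
    have hcl : closure (Submodule.span ℂ (Set.range e) : Set X) ⊆
        (LinearMap.ker (φ : X →ₗ[ℂ] ℂ) : Set X) :=
      (ContinuousLinearMap.isClosed_ker φ).closure_subset_iff.mpr hle
    exact LinearMap.mem_ker.mp (hcl (hdense hy))
  have hφ0 : ∀ x, φ x = 0 := by
    intro x
    have hx := hφT x
    rw [Top, ContinuousLinearMap.add_apply, map_add, hφN _ (hPmem x), hφB x,
      add_zero] at hx
    exact hx.symm
  exact hφne (ContinuousLinearMap.ext hφ0)


end JClassPaper
end
end

section
/- Let X be a complex Banach space and T ∈ L(X). If δ(T) > 1 and ker T ≠ {0}, then T is J^mix-class; that is, there exists a non-zero x ∈ X with J^mix_T(x) = X. Moreover, already δ(T) > 1 alone implies J^mix_T(0) = X, i.e. for every y ∈ X there is a sequence (z_m) in X with z_m → 0 and T^m z_m → y. -/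
open Filter Topology Metric
open scoped ENNReal

noncomputable section

namespace JClassPaper

variable {X : Type*} [NormedAddCommGroup X] [NormedSpace ℂ X]

/-- Key lemma: if `δ(T) > 1`, for every `y` there is a sequence `z` with `z → 0` and
`Tᵐ (z m) = y` for all `m`. -/
lemma key_seq {X : Type*} [NormedAddCommGroup X] [NormedSpace ℂ X] [CompleteSpace X]
    (T : X →L[ℂ] X) (hd : 1 < dmod T) (y : X) :
    ∃ z : ℕ → X, Tendsto z atTop (𝓝 0) ∧ ∀ m, (T ^ m) (z m) = y := by
  obtain ⟨n, hn⟩ : ∃ n : ℕ, 1 < smod (T ^ (n + 1)) ^ ((1 : ℝ) / (n + 1)) := by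
    by_contra h
    push_neg at h
    exact absurd (Real.iSup_le h zero_le_one) (not_le.mpr hd)
  set N : ℕ := n + 1 with hN
  have hNpos : 0 < N := Nat.succ_pos n
  have hsnn : 0 ≤ smod (T ^ N) := Real.sSup_nonneg (fun r hr => hr.1)
  have hsm : 1 < smod (T ^ N) := by
    by_contra h
    push_neg at h
    have := Real.rpow_le_one hsnn h (by positivity : (0:ℝ) ≤ (1 : ℝ) / (n + 1))
    linarith
  have hne : Set.Nonempty {r : ℝ | 0 ≤ r ∧ closedBall (0 : X) r ⊆ (T ^ N) '' closedBall 0 1} := by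
    by_contra h
    rw [Set.not_nonempty_iff_eq_empty] at h
    have : smod (T ^ N) = 0 := by rw [smod, h, Real.sSup_empty]
    linarith
  obtain ⟨r, hrS, hr1⟩ : ∃ r ∈ {r : ℝ | 0 ≤ r ∧
      closedBall (0 : X) r ⊆ (T ^ N) '' closedBall 0 1}, 1 < r :=
    exists_lt_of_lt_csSup hne hsm
  have hr0 : 0 < r := lt_trans one_pos hr1
  -- one-step surjectivity with bound
  have step : ∀ w : X, ∃ v : X, (T ^ N) v = w ∧ ‖v‖ ≤ ‖w‖ / r := by
    intro w
    by_cases hw : w = 0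
    · refine ⟨0, by simp [hw], by simp [hw]⟩
    · have hwpos : 0 < ‖w‖ := norm_pos_iff.mpr hw
      have hmem : ((r / ‖w‖ : ℝ) • w) ∈ closedBall (0 : X) r := by
        rw [mem_closedBall_zero_iff, norm_smul, Real.norm_eq_abs,
          abs_of_pos (by positivity), div_mul_cancel₀ _ (ne_of_gt hwpos)]
      obtain ⟨v', hv'ball, hv'eq⟩ := hrS.2 hmem
      rw [mem_closedBall_zero_iff] at hv'ball
      refine ⟨(‖w‖ / r : ℝ) • v', ?_, ?_⟩
      · rw [ContinuousLinearMap.map_smul_of_tower, hv'eq, smul_smul,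
          div_mul_div_comm, mul_comm ‖w‖ r, div_self (by positivity), one_smul]
      · rw [norm_smul, Real.norm_eq_abs, abs_of_pos (by positivity)]
        calc ‖w‖ / r * ‖v'‖ ≤ ‖w‖ / r * 1 :=
              mul_le_mul_of_nonneg_left hv'ball (by positivity)
          _ = ‖w‖ / r := mul_one _
  -- iterated surjectivity with bound
  have iter : ∀ q : ℕ, ∃ w : X, (T ^ (N * q)) w = y ∧ ‖w‖ ≤ ‖y‖ / r ^ q := by
    intro q
    induction q with
    | zero => exact ⟨y, by simp, by simp⟩
    | succ q ih =>
      obtain ⟨w, hw, hwn⟩ := ih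
      obtain ⟨v, hv, hvn⟩ := step w
      refine ⟨v, ?_, ?_⟩
      · have hpow : T ^ (N * (q + 1)) = T ^ (N * q) * T ^ N := by
          rw [← pow_add]
          ring_nf
        rw [hpow, ContinuousLinearMap.mul_apply, hv, hw]
      · calc ‖v‖ ≤ ‖w‖ / r := hvn
          _ ≤ (‖y‖ / r ^ q) / r := by gcongr
          _ = ‖y‖ / r ^ (q + 1) := by rw [div_div, ← pow_succ]
  -- choose witnesses
  have hiter : ∀ m : ℕ, ∃ w : X, (T ^ (N * (m / N + 1))) w = y ∧
      ‖w‖ ≤ ‖y‖ / r ^ (m / N + 1) := fun m => iter (m / N + 1)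
  choose w hw hwn using hiter
  -- arithmetic facts
  have harith : ∀ m : ℕ, m ≤ N * (m / N + 1) ∧ N * (m / N + 1) - m ≤ N := by
    intro m
    have h1 : N * (m / N + 1) = N * (m / N) + N := by ring
    have h2 : N * (m / N) + m % N = m := Nat.div_add_mod' m N ▸ Nat.div_add_mod m N
    have h3 : m % N < N := Nat.mod_lt m hNpos
    rw [h1]
    set D := N * (m / N) with hD
    set M := m % N with hM
    omega
  set z : ℕ → X := fun m => (T ^ (N * (m / N + 1) - m)) (w m) with hz
  have hTz : ∀ m, (T ^ m) (z m) = y := by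
    intro m
    have hsum : m + (N * (m / N + 1) - m) = N * (m / N + 1) :=
      Nat.add_sub_cancel' (harith m).1
    have : (T ^ m) ((T ^ (N * (m / N + 1) - m)) (w m)) =
        (T ^ (N * (m / N + 1))) (w m) := by
      rw [← ContinuousLinearMap.mul_apply, ← pow_add, hsum]
    rw [hz]
    rw [this, hw]
  -- norm bound helper
  have hpb : ∀ (e : ℕ) (x : X), ‖(T ^ e) x‖ ≤ ‖T‖ ^ e * ‖x‖ := by
    intro e
    induction e with
    | zero => intro x; simp
    | succ e ih =>
      intro x
      rw [pow_succ, ContinuousLinearMap.mul_apply]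
      calc ‖(T ^ e) (T x)‖ ≤ ‖T‖ ^ e * ‖T x‖ := ih (T x)
        _ ≤ ‖T‖ ^ e * (‖T‖ * ‖x‖) :=
            mul_le_mul_of_nonneg_left (T.le_opNorm x) (by positivity)
        _ = ‖T‖ ^ (e + 1) * ‖x‖ := by ring
  set C : ℝ := (max 1 ‖T‖) ^ N with hC
  have hC1 : (1 : ℝ) ≤ max 1 ‖T‖ := le_max_left _ _
  have hbound : ∀ m, ‖z m‖ ≤ C * ‖y‖ * (1 / r) ^ (m / N + 1) := by
    intro m
    have he : N * (m / N + 1) - m ≤ N := (harith m).2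
    calc ‖z m‖ ≤ ‖T‖ ^ (N * (m / N + 1) - m) * ‖w m‖ := hpb _ _
      _ ≤ C * ‖w m‖ := by
          apply mul_le_mul_of_nonneg_right _ (norm_nonneg _)
          calc ‖T‖ ^ (N * (m / N + 1) - m) ≤ (max 1 ‖T‖) ^ (N * (m / N + 1) - m) :=
                pow_le_pow_left₀ (norm_nonneg _) (le_max_right _ _) _
            _ ≤ C := pow_le_pow_right₀ hC1 he
      _ ≤ C * (‖y‖ / r ^ (m / N + 1)) := by
          apply mul_le_mul_of_nonneg_left (hwn m) (by positivity)
      _ = C * ‖y‖ * (1 / r) ^ (m / N + 1) := by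
          rw [div_pow, one_pow]
          ring
  -- tendsto 0
  have hq : Tendsto (fun m : ℕ => m / N + 1) atTop atTop := by
    apply tendsto_atTop_atTop.mpr
    intro b
    refine ⟨N * b, fun m hm => ?_⟩
    have : b ≤ m / N := (Nat.le_div_iff_mul_le hNpos).mpr (by rwa [Nat.mul_comm] at hm)
    omega
  have hpow0 : Tendsto (fun k : ℕ => (1 / r) ^ k) atTop (𝓝 (0 : ℝ)) := by
    apply tendsto_pow_atTop_nhds_zero_of_lt_one (by positivity)
    rw [div_lt_one hr0]
    linarith
  have hrhs : Tendsto (fun m : ℕ => C * ‖y‖ * (1 / r) ^ (m / N + 1)) atTop (𝓝 0) := by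
    have := (hpow0.comp hq).const_mul (C * ‖y‖)
    simpa using this
  have hz0 : Tendsto z atTop (𝓝 0) := by
    rw [tendsto_zero_iff_norm_tendsto_zero]
    exact squeeze_zero (fun m => norm_nonneg _) hbound hrhs
  exact ⟨z, hz0, hTz⟩


/-- If `δ(T) > 1`, then `J^mix_T(0) = X`; and if moreover `ker T ≠ {0}`, then

`T` is `J^mix`-class. -/
theorem stmt9 {X : Type*} [NormedAddCommGroup X] [NormedSpace ℂ X] [CompleteSpace X]
    (T : X →L[ℂ] X) (hd : 1 < dmod T) :
    JMixSet T 0 = Set.univ ∧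
      (LinearMap.ker (T : X →ₗ[ℂ] X) ≠ ⊥ → ∃ x : X, x ≠ 0 ∧ JMixSet T x = Set.univ) := by
  have key := key_seq T hd
  constructor
  · ext y
    simp only [Set.mem_univ, iff_true]
    obtain ⟨z, hz0, hTz⟩ := key y
    exact ⟨z, hz0, by simpa [hTz] using (tendsto_const_nhds : Tendsto (fun _ : ℕ => y) atTop (𝓝 y))⟩
  · intro hker
    obtain ⟨x, hxmem, hx0⟩ := Submodule.exists_mem_ne_zero_of_ne_bot hker
    have hTx : T x = 0 := hxmem
    refine ⟨x, hx0, ?_⟩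
    ext y
    simp only [Set.mem_univ, iff_true]
    obtain ⟨z, hz0, hTz⟩ := key y
    refine ⟨fun m => x + z m, ?_, ?_⟩
    · simpa using (tendsto_const_nhds.add hz0 :
        Tendsto (fun m => x + z m) atTop (𝓝 (x + 0)))
    · apply Tendsto.congr' _ (tendsto_const_nhds : Tendsto (fun _ : ℕ => y) atTop (𝓝 y))
      filter_upwards [eventually_ge_atTop 1] with m hm
      obtain ⟨k, rfl⟩ : ∃ k, m = k + 1 := ⟨m - 1, by omega⟩
      have hx' : (T ^ (k + 1)) x = 0 := by
        rw [pow_succ, ContinuousLinearMap.mul_apply, hTx, map_zero]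
      rw [map_add, hx', hTz, zero_add]


end JClassPaper
end
end

section
/- Let X be a complex Banach space. Then the set M := {T ∈ L(X) : δ(T) > 1 and ker T ≠ {0}} is open in L(X) with respect to the operator-norm topology. -/
open Filter Topology Metric
open scoped ENNReal

noncomputable section

namespace JClassPaper

variable {X : Type*} [NormedAddCommGroup X] [NormedSpace ℂ X]

/-- From the covering hypothesis, solve `A x = y` with norm control. -/
lemma solve_step' {A : X →L[ℂ] X} {r : ℝ} (hr : 0 < r)
    (hA : closedBall (0:X) r ⊆ A '' closedBall 0 1) (y : X) :
    ∃ x : X, A x = y ∧ ‖x‖ ≤ ‖y‖ / r := by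
  by_cases hy : y = 0
  · exact ⟨0, by simp [hy], by simp [hy, le_div_iff₀ hr]⟩
  · have hny : (0:ℝ) < ‖y‖ := norm_pos_iff.2 hy
    have hmem : (r / ‖y‖) • y ∈ closedBall (0:X) r := by
      simp only [mem_closedBall, dist_zero_right, norm_smul, Real.norm_eq_abs,
        abs_of_nonneg (le_of_lt (div_pos hr hny))]
      rw [div_mul_cancel₀ _ hny.ne']
    obtain ⟨u, hu, hAu⟩ := hA hmem
    refine ⟨(‖y‖ / r) • u, ?_, ?_⟩
    · rw [A.map_smul_of_tower, hAu, smul_smul]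
      rw [div_mul_div_comm, mul_comm]
      rw [div_self (by positivity), one_smul]
    · rw [norm_smul, Real.norm_eq_abs, abs_of_nonneg (by positivity)]
      have : ‖u‖ ≤ 1 := by simpa [mem_closedBall, dist_zero_right] using hu
      calc ‖y‖ / r * ‖u‖ ≤ ‖y‖ / r * 1 := by
            exact mul_le_mul_of_nonneg_left this (by positivity)
        _ = ‖y‖ / r := mul_one _


/-- Perturbation lemma: solve `B z = A x₀` with `z` close to `x₀`. -/
lemma key_s12 [CompleteSpace X] {A B : X →L[ℂ] X} {r : ℝ} (hr : 0 < r)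
    (hA : closedBall (0:X) r ⊆ A '' closedBall 0 1) (hBA : ‖B - A‖ < r) (x₀ : X) :
    ∃ z : X, B z = A x₀ ∧
      ‖z - x₀‖ ≤ ‖x₀‖ * (‖B - A‖ / r) / (1 - ‖B - A‖ / r) := by
  set q : ℝ := ‖B - A‖ / r with hq
  have hq0 : 0 ≤ q := by positivity
  have hq1 : q < 1 := (div_lt_one hr).2 hBA
  choose sol hsol1 hsol2 using solve_step' hr hA
  set x : ℕ → X := fun n => Nat.rec x₀ (fun _ xk => sol ((A - B) xk)) n with hxdef
  have hx0 : x 0 = x₀ := rfl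
  have hxsucc : ∀ k, A (x (k+1)) = (A - B) (x k) := fun k => hsol1 _
  have hnorm : ∀ k, ‖x k‖ ≤ ‖x₀‖ * q ^ k := by
    intro k
    induction k with
    | zero => simp [hx0]
    | succ k ih =>
      have h1 : ‖x (k+1)‖ ≤ ‖(A - B) (x k)‖ / r := hsol2 _
      have h2 : ‖(A - B) (x k)‖ ≤ ‖B - A‖ * ‖x k‖ := by
        calc ‖(A - B) (x k)‖ ≤ ‖A - B‖ * ‖x k‖ := (A - B).le_opNorm _
          _ = ‖B - A‖ * ‖x k‖ := by rw [norm_sub_rev]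
      calc ‖x (k+1)‖ ≤ (‖B - A‖ * ‖x k‖) / r := h1.trans (by gcongr)
        _ ≤ (‖B - A‖ * (‖x₀‖ * q ^ k)) / r := by gcongr
        
        _ = ‖x₀‖ * q ^ (k+1) := by
            rw [hq]; field_simp; rw [pow_succ]; field_simp
  have hgeo : Summable (fun k : ℕ => ‖x₀‖ * q ^ k) :=
    (summable_geometric_of_lt_one hq0 hq1).mul_left _
  have hsumnorm : Summable (fun k => ‖x k‖) :=
    hgeo.of_nonneg_of_le (fun _ => norm_nonneg _) hnorm
  have hsum : Summable x := hsumnorm.of_norm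
  set z : X := ∑' k, x k with hz
  have hxt : Tendsto x atTop (𝓝 0) := by
    have : Tendsto (fun k : ℕ => ‖x₀‖ * q ^ k) atTop (𝓝 0) := by
      simpa using (tendsto_pow_atTop_nhds_zero_of_lt_one hq0 hq1).const_mul ‖x₀‖
    exact tendsto_zero_iff_norm_tendsto_zero.2
      (squeeze_zero (fun _ => norm_nonneg _) hnorm this)
  have hBx : ∀ k, B (x k) = A (x k) - A (x (k+1)) := by
    intro k
    rw [hxsucc k, ContinuousLinearMap.sub_apply]
    abel
  have hBsum : Summable (fun k => B (x k)) := (hsum.hasSum.mapL B).summable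
  have hBz : B z = A x₀ := by
    rw [hz, B.map_tsum hsum]
    have h1 : Tendsto (fun n => ∑ k ∈ Finset.range n, B (x k)) atTop
        (𝓝 (∑' k, B (x k))) := hBsum.hasSum.tendsto_sum_nat
    have h2 : Tendsto (fun n => ∑ k ∈ Finset.range n, B (x k)) atTop (𝓝 (A x₀)) := by
      have heq : ∀ n, ∑ k ∈ Finset.range n, B (x k) = A (x 0) - A (x n) := by
        intro n
        rw [show (fun k => B (x k)) = fun k => A (x k) - A (x (k+1)) from funext hBx]
        exact Finset.sum_range_sub' (fun k => A (x k)) n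
      simp only [heq, hx0]
      have : Tendsto (fun n => A (x n)) atTop (𝓝 (A 0)) :=
        (A.continuous.tendsto 0).comp hxt
      rw [map_zero] at this
      simpa using tendsto_const_nhds.sub this
    exact tendsto_nhds_unique h1 h2
  refine ⟨z, hBz, ?_⟩
  have hzx : z - x₀ = ∑' k, x (k+1) := by
    rw [hz, hsum.tsum_eq_zero_add, hx0]
    abel
  rw [hzx]
  have hs1 : Summable (fun k => ‖x (k+1)‖) := (summable_nat_add_iff 1).2 hsumnorm
  have hs2 : Summable (fun k : ℕ => ‖x₀‖ * q ^ (k+1)) := by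
    have := ((summable_geometric_of_lt_one hq0 hq1).mul_left (‖x₀‖ * q))
    simpa [mul_assoc, pow_succ, mul_comm, mul_left_comm] using this
  calc ‖∑' k, x (k+1)‖ ≤ ∑' k, ‖x (k+1)‖ := norm_tsum_le_tsum_norm hs1
    _ ≤ ∑' k : ℕ, ‖x₀‖ * q ^ (k+1) := Summable.tsum_le_tsum (fun k => hnorm (k+1)) hs1 hs2
    _ = ‖x₀‖ * q * (1 - q)⁻¹ := by
        have : (fun k : ℕ => ‖x₀‖ * q ^ (k+1)) = fun k : ℕ => (‖x₀‖ * q) * q ^ k := by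
          funext k; rw [pow_succ]; ring
        rw [this, tsum_mul_left, tsum_geometric_of_lt_one hq0 hq1]
    _ = ‖x₀‖ * q / (1 - q) := by ring


lemma smod_nonneg (A : X →L[ℂ] X) : 0 ≤ smod A :=
  Real.sSup_nonneg (fun _ hr => hr.1)

lemma mem_imp_le [Nontrivial X] (A : X →L[ℂ] X) {r : ℝ}
    (hr : r ∈ {r : ℝ | 0 ≤ r ∧ closedBall (0 : X) r ⊆ A '' closedBall 0 1}) : r ≤ ‖A‖ := by
  obtain ⟨hr0, hr1⟩ := hr
  obtain ⟨w, hw⟩ := exists_ne (0 : X)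
  have hwn : (0:ℝ) < ‖w‖ := norm_pos_iff.2 hw
  set y : X := (r / ‖w‖) • w with hy
  have hyn : ‖y‖ = r := by
    rw [hy, norm_smul, Real.norm_eq_abs, abs_of_nonneg (by positivity),
      div_mul_cancel₀ _ hwn.ne']
  have hmem : y ∈ closedBall (0:X) r := by simp [mem_closedBall, dist_zero_right, hyn]
  obtain ⟨u, hu, hAu⟩ := hr1 hmem
  have hu1 : ‖u‖ ≤ 1 := by simpa [mem_closedBall, dist_zero_right] using hu
  calc r = ‖A u‖ := by rw [hAu, hyn]
    _ ≤ ‖A‖ * ‖u‖ := A.le_opNorm u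
    _ ≤ ‖A‖ * 1 := mul_le_mul_of_nonneg_left hu1 (norm_nonneg _)
    _ = ‖A‖ := mul_one _

lemma smod_bddAbove [Nontrivial X] (A : X →L[ℂ] X) :
    BddAbove {r : ℝ | 0 ≤ r ∧ closedBall (0 : X) r ⊆ A '' closedBall 0 1} :=
  ⟨‖A‖, fun _ hr => mem_imp_le A hr⟩

lemma le_smod [Nontrivial X] {A : X →L[ℂ] X} {r : ℝ} (h0 : 0 ≤ r)
    (h : closedBall (0 : X) r ⊆ A '' closedBall 0 1) : r ≤ smod A :=
  le_csSup (smod_bddAbove A) ⟨h0, h⟩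

lemma smod_le_norm [Nontrivial X] (A : X →L[ℂ] X) : smod A ≤ ‖A‖ :=
  Real.sSup_le (fun _ hr => mem_imp_le A hr) (norm_nonneg A)

lemma zero_mem_smod_set (A : X →L[ℂ] X) :
    (0:ℝ) ∈ {r : ℝ | 0 ≤ r ∧ closedBall (0 : X) r ⊆ A '' closedBall 0 1} := by
  refine ⟨le_refl 0, ?_⟩
  intro y hy
  rw [closedBall_zero, Set.mem_singleton_iff] at hy
  subst hy
  exact ⟨0, by simp, map_zero A⟩

/-- If `1 < smod A` then there is `r > 1` with the covering property. -/
lemma exists_cover [Nontrivial X] {A : X →L[ℂ] X} (h : 1 < smod A) :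
    ∃ r : ℝ, 1 < r ∧ closedBall (0 : X) r ⊆ A '' closedBall 0 1 := by
  have hne : {r : ℝ | 0 ≤ r ∧ closedBall (0 : X) r ⊆ A '' closedBall 0 1}.Nonempty :=
    ⟨0, zero_mem_smod_set A⟩
  obtain ⟨r, hrmem, hr1⟩ := (lt_csSup_iff (smod_bddAbove A) hne).1 h
  exact ⟨r, hr1, hrmem.2⟩

lemma dmod_gt_one [Nontrivial X] {B : X →L[ℂ] X} (m : ℕ) (h : 1 < smod (B ^ (m+1))) :
    1 < dmod B := by
  have hbdd : BddAbove (Set.range fun n : ℕ => smod (B ^ (n + 1)) ^ ((1 : ℝ) / (n + 1))) := by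
    refine ⟨max 1 ‖B‖, ?_⟩
    rintro _ ⟨n, rfl⟩
    have hM1 : (1:ℝ) ≤ max 1 ‖B‖ := le_max_left _ _
    have hM0 : (0:ℝ) ≤ max 1 ‖B‖ := zero_le_one.trans hM1
    have h1 : smod (B ^ (n+1)) ≤ (max 1 ‖B‖) ^ (n+1) := by
      calc smod (B ^ (n+1)) ≤ ‖B ^ (n+1)‖ := smod_le_norm _
        _ ≤ ‖B‖ ^ (n+1) := norm_pow_le' B n.succ_pos
        _ ≤ (max 1 ‖B‖) ^ (n+1) := pow_le_pow_left₀ (norm_nonneg _) (le_max_right _ _) _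
    calc smod (B ^ (n + 1)) ^ ((1 : ℝ) / (n + 1))
        ≤ ((max 1 ‖B‖) ^ (n+1)) ^ ((1 : ℝ) / (n + 1)) :=
          Real.rpow_le_rpow (smod_nonneg _) h1 (by positivity)
      _ = max 1 ‖B‖ := by
          rw [← Real.rpow_natCast (max 1 ‖B‖) (n+1), ← Real.rpow_mul hM0]
          have hx : ((n+1:ℕ):ℝ) * ((1:ℝ) / (↑n + 1)) = 1 := by
            push_cast
            field_simp
          rw [hx, Real.rpow_one]
  have hfm : 1 < smod (B ^ (m+1)) ^ ((1 : ℝ) / (m + 1)) := by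
    rw [Real.one_lt_rpow_iff_of_pos (lt_trans one_pos h)]
    exact Or.inl ⟨h, by positivity⟩
  exact lt_of_lt_of_le hfm (le_ciSup hbdd m)

lemma exists_smod_gt_one {T : X →L[ℂ] X} (h : 1 < dmod T) :
    ∃ m : ℕ, 1 < smod (T ^ (m+1)) := by
  by_contra hc
  push_neg at hc
  have : dmod T ≤ 1 := by
    apply ciSup_le
    intro n
    exact Real.rpow_le_one (smod_nonneg _) (hc n) (by positivity)
  exact absurd h this.not_gt

lemma pow_inj {S : X →L[ℂ] X} (h : ∀ v : X, S v = 0 → v = 0) :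
    ∀ (n : ℕ) (v : X), (S ^ n) v = 0 → v = 0 := by
  intro n
  induction n with
  | zero => intro v hv; simpa using hv
  | succ n ih =>
    intro v hv
    rw [pow_succ', ContinuousLinearMap.mul_apply] at hv
    exact ih v (h _ hv)


/-- the set `{T ∈ L(X) : δ(T) > 1 and ker T ≠ {0}}` is open in the operator
norm topology. -/
theorem stmt12 {X : Type*} [NormedAddCommGroup X] [NormedSpace ℂ X] [CompleteSpace X] :
    IsOpen {T : X →L[ℂ] X | 1 < dmod T ∧ LinearMap.ker (T : X →ₗ[ℂ] X) ≠ ⊥} := by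
  rw [Metric.isOpen_iff]
  rintro T ⟨hd, hk⟩
  obtain ⟨x₀, hx₀mem, hx₀⟩ := (Submodule.ne_bot_iff _).1 hk
  have hTx₀ : T x₀ = 0 := LinearMap.mem_ker.1 hx₀mem
  haveI : Nontrivial X := ⟨⟨x₀, 0, hx₀⟩⟩
  obtain ⟨m, hm⟩ := exists_smod_gt_one hd
  obtain ⟨r, hr1, hcov⟩ := exists_cover hm
  have hr0 : (0:ℝ) < r := lt_trans one_pos hr1
  set A : X →L[ℂ] X := T ^ (m+1) with hA
  have hAx₀ : A x₀ = 0 := by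
    rw [hA, pow_succ, ContinuousLinearMap.mul_apply, hTx₀, map_zero]
  set c : ℝ := min (r - 1) (r / 2) with hc
  have hcpos : 0 < c := lt_min (by linarith) (by linarith)
  have hcont : ContinuousAt (fun S : X →L[ℂ] X => S ^ (m+1)) T :=
    (continuous_pow (m+1)).continuousAt
  obtain ⟨δ, hδpos, hδ⟩ := Metric.continuousAt_iff.1 hcont c hcpos
  refine ⟨δ, hδpos, ?_⟩
  intro S hS
  have hSd : dist S T < δ := mem_ball.1 hS
  have hdist : ‖S ^ (m+1) - A‖ < c := by
    have := hδ hSd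
    rwa [dist_eq_norm] at this
  set B : X →L[ℂ] X := S ^ (m+1) with hB
  set ε : ℝ := ‖B - A‖ with hε
  have hε0 : 0 ≤ ε := norm_nonneg _
  have hε1 : ε < r - 1 := lt_of_lt_of_le hdist (min_le_left _ _)
  have hε2 : ε < r / 2 := lt_of_lt_of_le hdist (min_le_right _ _)
  have hεr : ε < r := by linarith
  set q : ℝ := ε / r with hq
  have hq0 : 0 ≤ q := by positivity
  have hq1 : q < 1 := (div_lt_one hr0).2 hεr
  have h1q : 0 < 1 - q := by linarith
  have hq2 : q < 1/2 := by
    rw [hq, div_lt_iff₀ hr0]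
    linarith
  -- kernel of S is nontrivial
  obtain ⟨z, hBz, hznorm⟩ := key_s12 hr0 hcov hεr x₀
  rw [hAx₀] at hBz
  have hx₀pos : (0:ℝ) < ‖x₀‖ := norm_pos_iff.2 hx₀
  have hz0 : z ≠ 0 := by
    intro hz
    rw [hz, zero_sub, norm_neg] at hznorm
    have hfrac : ‖x₀‖ * q / (1 - q) < ‖x₀‖ := by
      rw [div_lt_iff₀ h1q]
      nlinarith
    linarith
  have hker : LinearMap.ker (S : X →ₗ[ℂ] X) ≠ ⊥ := by
    intro hbot
    have hinj : ∀ v : X, S v = 0 → v = 0 := by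
      intro v hv
      have : v ∈ LinearMap.ker (S : X →ₗ[ℂ] X) := LinearMap.mem_ker.2 hv
      rw [hbot] at this
      exact Submodule.mem_bot ℂ |>.1 this
    exact hz0 (pow_inj hinj (m+1) z hBz)
  -- dmod S > 1
  have hsub : closedBall (0:X) (r - ε) ⊆ B '' closedBall 0 1 := by
    intro y hy
    have hyn : ‖y‖ ≤ r - ε := by simpa [mem_closedBall, dist_zero_right] using hy
    obtain ⟨x, hAx, hxn⟩ := solve_step' hr0 hcov y
    obtain ⟨z', hBz', hz'n⟩ := key_s12 hr0 hcov hεr x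
    rw [hAx] at hBz'
    refine ⟨z', ?_, hBz'⟩
    simp only [mem_closedBall, dist_zero_right]
    have h1 : ‖z'‖ ≤ ‖x‖ + ‖z' - x‖ := by
      have := norm_add_le x (z' - x)
      simpa using this
    have hxle : ‖x‖ ≤ (r - ε)/r := hxn.trans (by gcongr)
    have h1q' : 1 - q = (r - ε)/r := by
      rw [hq]
      field_simp
    have h2 : ‖x‖ + ‖x‖ * q / (1 - q) = ‖x‖ / (1 - q) := by
      field_simp
      ring
    calc ‖z'‖ ≤ ‖x‖ + ‖z' - x‖ := h1
      _ ≤ ‖x‖ + ‖x‖ * q / (1 - q) := by linarith [hz'n]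
      _ = ‖x‖ / (1 - q) := h2
      _ ≤ ((r - ε)/r) / (1 - q) := by gcongr
      _ = 1 := by rw [h1q', div_self (ne_of_gt (div_pos (by linarith) hr0))]
  have hsm : 1 < smod B := by
    have := le_smod (r := r - ε) (A := B) (by linarith) hsub
    linarith
  exact ⟨dmod_gt_one m hsm, hker⟩


end JClassPaper
end
end

section
/- Let w = (w_n)_{n≥1} be a bounded sequence of positive reals and let B_w be the weighted backward shift on l∞. Then B_w is J-class if and only if r₂ := lim_n inf_k (w_k · w_{k+1} ⋯ w_{k+n-1})^{1/n} > 1. -/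
open Filter Topology Metric
open scoped ENNReal

noncomputable section
set_option maxHeartbeats 1000000
set_option synthInstance.maxHeartbeats 1000000

namespace JClassPaper

variable {X : Type*} [NormedAddCommGroup X] [NormedSpace ℂ X]

theorem pow_apply' (w : ℕ → ℝ) (B : linf →L[ℂ] linf)
    (hB : ∀ (x : linf) (n : ℕ), (B x) n = (w n : ℂ) * x (n + 1)) :
    ∀ (k : ℕ) (x : linf) (n : ℕ),
      ((B ^ k) x) n = (∏ i ∈ Finset.range k, (w (n + i) : ℂ)) * x (n + k) := by
  intro k
  induction k with
  | zero => intro x n; simp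
  | succ k ih =>
    intro x n
    have h1 : (B ^ (k+1)) x = (B ^ k) (B x) := by rw [pow_succ]; rfl
    rw [h1, ih (B x) n, hB x (n + k), Finset.prod_range_succ, ← add_assoc, mul_assoc]

theorem grow (w : ℕ → ℝ) (hpos : ∀ n, 0 < w n) (c : ℝ) (hc : 1 < c)
    (n0 : ℕ) (hn0 : 1 ≤ n0) (e : ℝ) (he0 : 0 < e) (he1 : e ≤ 1)
    (hew : ∀ k, e ≤ w k)
    (hblock : ∀ k, c ^ n0 ≤ ∏ i ∈ Finset.range n0, w (k + i)) :
    ∀ m k, e ^ n0 / c ^ n0 * c ^ m ≤ ∏ i ∈ Finset.range m, w (k + i) := by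
  intro m
  induction m using Nat.strong_induction_on with
  | _ m ih =>
    intro k
    rcases lt_or_ge m n0 with hm | hm
    · have h1 : e ^ n0 ≤ e ^ m := pow_le_pow_of_le_one he0.le he1 hm.le
      have h2 : e ^ m ≤ ∏ i ∈ Finset.range m, w (k + i) := by
        calc e ^ m = ∏ _i ∈ Finset.range m, e := by
              rw [Finset.prod_const, Finset.card_range]
        _ ≤ _ := Finset.prod_le_prod (fun i _ => he0.le) (fun i _ => hew _)
      have h3 : e ^ n0 / c ^ n0 * c ^ m ≤ e ^ n0 := by
        rw [div_mul_eq_mul_div, div_le_iff₀ (by positivity)]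
        exact mul_le_mul_of_nonneg_left (pow_le_pow_right₀ hc.le hm.le)
          (by positivity)
      linarith
    · obtain ⟨m', rfl⟩ : ∃ m', m = n0 + m' := ⟨m - n0, by omega⟩
      rw [Finset.prod_range_add]
      simp only [← add_assoc]
      have ih' := ih m' (by omega) (k + n0)
      have hcalc : e ^ n0 / c ^ n0 * c ^ (n0 + m')
          = c ^ n0 * (e ^ n0 / c ^ n0 * c ^ m') := by rw [pow_add]; ring
      rw [hcalc]
      have hnn : (0:ℝ) ≤ e ^ n0 / c ^ n0 * c ^ m' := by positivity
      calc c ^ n0 * (e ^ n0 / c ^ n0 * c ^ m')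
          ≤ (∏ i ∈ Finset.range n0, w (k + i)) *
            (∏ i ∈ Finset.range m', w (k + n0 + i)) := by
            apply mul_le_mul (hblock k) _ hnn
              (Finset.prod_nonneg fun i _ => (hpos _).le)
            calc e ^ n0 / c ^ n0 * c ^ m' ≤ ∏ i ∈ Finset.range m', w (k + n0 + i) := ih'

theorem Abdd (w : ℕ → ℝ) (hpos : ∀ n, 0 < w n) (n : ℕ) :
    BddBelow (Set.range fun k => ∏ i ∈ Finset.range n, w (k + i)) := by
  refine ⟨0, ?_⟩
  rintro _ ⟨k, rfl⟩
  exact Finset.prod_nonneg fun i _ => (hpos _).le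

theorem Anonneg (w : ℕ → ℝ) (hpos : ∀ n, 0 < w n) (n : ℕ) :
    0 ≤ ⨅ k : ℕ, ∏ i ∈ Finset.range n, w (k + i) :=
  le_ciInf fun k => Finset.prod_nonneg fun i _ => (hpos _).le

theorem Asuper (w : ℕ → ℝ) (hpos : ∀ n, 0 < w n) (a b : ℕ) :
    (⨅ k : ℕ, ∏ i ∈ Finset.range a, w (k + i)) *
      (⨅ k : ℕ, ∏ i ∈ Finset.range b, w (k + i)) ≤
      ⨅ k : ℕ, ∏ i ∈ Finset.range (a + b), w (k + i) := by
  refine le_ciInf fun k => ?_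
  rw [Finset.prod_range_add]
  simp only [← add_assoc]
  exact mul_le_mul (ciInf_le (Abdd w hpos a) k) (ciInf_le (Abdd w hpos b) (k + a))
    (Anonneg w hpos b) (Finset.prod_nonneg fun i _ => (hpos _).le)

theorem Apow (w : ℕ → ℝ) (hpos : ∀ n, 0 < w n) (n : ℕ) :
    ∀ q : ℕ, (⨅ k : ℕ, ∏ i ∈ Finset.range n, w (k + i)) ^ q ≤
      ⨅ k : ℕ, ∏ i ∈ Finset.range (q * n), w (k + i) := by
  intro q
  induction q with
  | zero => simp [ciInf_const]
  | succ q ih =>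
    have h1 : (q + 1) * n = q * n + n := by ring
    rw [h1, pow_succ]
    calc (⨅ k : ℕ, ∏ i ∈ Finset.range n, w (k + i)) ^ q *
          (⨅ k : ℕ, ∏ i ∈ Finset.range n, w (k + i))
        ≤ (⨅ k : ℕ, ∏ i ∈ Finset.range (q * n), w (k + i)) *
          (⨅ k : ℕ, ∏ i ∈ Finset.range n, w (k + i)) :=
          mul_le_mul_of_nonneg_right ih (Anonneg w hpos n)
    _ ≤ _ := Asuper w hpos (q * n) n

/-- the weighted backward shift `B_w` on `l∞` is J-class iff
`r₂ = lim_n inf_k (w_k ⋯ w_{k+n-1})^{1/n} > 1`. -/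

theorem stmt14 (w : ℕ → ℝ) (hpos : ∀ n, 0 < w n) (hbd : ∃ C : ℝ, ∀ n, w n ≤ C)
    (B : linf →L[ℂ] linf)
    (hB : ∀ (x : linf) (n : ℕ), (B x) n = (w n : ℂ) * x (n + 1))
    (r₂ : ℝ)
    (hr₂ : Tendsto
      (fun n : ℕ => (⨅ k : ℕ, ∏ i ∈ Finset.range n, w (k + i)) ^ ((1:ℝ)/n))
      atTop (𝓝 r₂)) :
    JClass B ↔ 1 < r₂ := by
  constructor
  · -- J-class implies r₂ > 1
    rintro ⟨x, -, hJ⟩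
    -- the constant sequence with value ‖x‖ + 3
    set R : ℝ := ‖x‖ + 3 with hRdef
    have hRpos : 0 < R := by have := norm_nonneg x; simp [hRdef]; linarith
    have hymem : Memℓp (fun _ : ℕ => (R : ℂ)) ∞ :=
      memℓp_infty ⟨‖(R : ℂ)‖, by rintro _ ⟨j, rfl⟩; exact le_refl _⟩
    set y : linf := ⟨fun _ => (R : ℂ), hymem⟩ with hydef
    have hy : y ∈ JSet B x := hJ ▸ Set.mem_univ y
    obtain ⟨k, hk, u, hu, hT⟩ := hy
    have h1 := hu.eventually (Metric.ball_mem_nhds x one_pos)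
    have h2 := hT.eventually (Metric.ball_mem_nhds y one_pos)
    obtain ⟨N, hN1, hN2, hN3⟩ := ((eventually_ge_atTop 1).and (h1.and h2)).exists
    set m : ℕ := k N with hmdef
    have hm1 : 1 ≤ m := le_trans hN1 hk.le_apply
    have key : ∀ j : ℕ, (‖x‖ + 2) / (‖x‖ + 1) ≤ ∏ i ∈ Finset.range m, w (j + i) := by
      intro j
      have hprodpos : 0 < ∏ i ∈ Finset.range m, w (j + i) :=
        Finset.prod_pos fun i _ => hpos _
      -- the j-th coordinate of B^m (u N) is close to R
      have hc1 : ‖((B ^ m) (u N)) j - (R : ℂ)‖ ≤ 1 := by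
        have h := lp.norm_apply_le_norm ENNReal.top_ne_zero ((B ^ m) (u N) - y) j
        have h2' : ‖(B ^ m) (u N) - y‖ ≤ 1 := by
          have := hN3
          rw [dist_eq_norm] at this
          linarith
        have hco : ((B ^ m) (u N) - y) j = ((B ^ m) (u N)) j - (R : ℂ) := by
          rw [lp.coeFn_sub]; rfl
        rw [hco] at h
        linarith
      have hlow : ‖x‖ + 2 ≤ ‖((B ^ m) (u N)) j‖ := by
        have h := norm_sub_norm_le ((R : ℂ)) (((B ^ m) (u N)) j)
        rw [norm_sub_rev] at h
        have hnR : ‖(R : ℂ)‖ = R := by rw [Complex.norm_real]; exact abs_of_pos hRpos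
        rw [hnR] at h
        have : R - ‖((B ^ m) (u N)) j‖ ≤ 1 := le_trans h hc1
        simp only [hRdef] at this
        linarith
      have hup : ‖(u N) (j + m)‖ ≤ ‖x‖ + 1 := by
        have ha : ‖(u N) (j + m)‖ ≤ ‖u N‖ := lp.norm_apply_le_norm ENNReal.top_ne_zero _ _
        have hb : ‖u N‖ ≤ ‖x‖ + 1 := by
          have := hN2
          rw [dist_eq_norm] at this
          calc ‖u N‖ = ‖x + (u N - x)‖ := by ring_nf
          _ ≤ ‖x‖ + ‖u N - x‖ := norm_add_le _ _
          _ ≤ ‖x‖ + 1 := by linarith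
        linarith
      have hfj : ((B ^ m) (u N)) j
          = (∏ i ∈ Finset.range m, (w (j + i) : ℂ)) * (u N) (j + m) :=
        pow_apply' w B hB m (u N) j
      have hnp : ‖(∏ i ∈ Finset.range m, (w (j + i) : ℂ))‖
          = ∏ i ∈ Finset.range m, w (j + i) := by
        rw [← Complex.ofReal_prod, Complex.norm_real]
        exact abs_of_pos hprodpos
      have hcomb : ‖x‖ + 2 ≤ (∏ i ∈ Finset.range m, w (j + i)) * (‖x‖ + 1) := by
        calc ‖x‖ + 2 ≤ ‖((B ^ m) (u N)) j‖ := hlow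
        _ = ‖(∏ i ∈ Finset.range m, (w (j + i) : ℂ))‖ * ‖(u N) (j + m)‖ := by
              rw [hfj, norm_mul]
        _ ≤ (∏ i ∈ Finset.range m, w (j + i)) * (‖x‖ + 1) := by
              rw [hnp]
              exact mul_le_mul_of_nonneg_left hup hprodpos.le
      rw [div_le_iff₀ (by have := norm_nonneg x; linarith)]
      exact hcomb
    have hρ1 : 1 < (‖x‖ + 2) / (‖x‖ + 1) := by
      rw [lt_div_iff₀ (by have := norm_nonneg x; linarith)]
      linarith
    have hAm : (‖x‖ + 2) / (‖x‖ + 1) ≤ ⨅ j : ℕ, ∏ i ∈ Finset.range m, w (j + i) :=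
      le_ciInf key
    have hAm1 : 1 < ⨅ j : ℕ, ∏ i ∈ Finset.range m, w (j + i) := lt_of_lt_of_le hρ1 hAm
    -- r₂ ≥ (A m)^{1/m} > 1
    have hmR : (0 : ℝ) < (m : ℝ) := by exact_mod_cast hm1
    have hsub : Tendsto (fun q : ℕ =>
        (⨅ k : ℕ, ∏ i ∈ Finset.range ((q + 1) * m), w (k + i)) ^ ((1:ℝ)/(((q + 1) * m : ℕ) : ℝ)))
        atTop (𝓝 r₂) := by
      apply hr₂.comp
      apply tendsto_atTop_mono (fun q : ℕ => ?_) (tendsto_add_atTop_nat 1)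
      calc q + 1 = (q + 1) * 1 := by ring
      _ ≤ (q + 1) * m := Nat.mul_le_mul_left _ hm1
    have hterm : ∀ q : ℕ,
        (⨅ j : ℕ, ∏ i ∈ Finset.range m, w (j + i)) ^ ((1:ℝ)/(m : ℝ)) ≤
        (⨅ k : ℕ, ∏ i ∈ Finset.range ((q + 1) * m), w (k + i)) ^ ((1:ℝ)/(((q + 1) * m : ℕ) : ℝ)) := by
      intro q
      have h1 := Apow w hpos m (q + 1)
      have h2 : (0:ℝ) ≤ ⨅ j : ℕ, ∏ i ∈ Finset.range m, w (j + i) := Anonneg w hpos m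
      have hqm : (0 : ℝ) < (((q + 1) * m : ℕ) : ℝ) := by
        have : 1 ≤ (q + 1) * m := Nat.one_le_iff_ne_zero.2 (by positivity)
        exact_mod_cast this
      have heq : (⨅ j : ℕ, ∏ i ∈ Finset.range m, w (j + i)) ^ ((1:ℝ)/(m : ℝ))
          = ((⨅ j : ℕ, ∏ i ∈ Finset.range m, w (j + i)) ^ ((q:ℕ) + 1)) ^ ((1:ℝ)/(((q + 1) * m : ℕ) : ℝ)) := by
        rw [← Real.rpow_natCast (⨅ j : ℕ, ∏ i ∈ Finset.range m, w (j + i)) (q + 1),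
          ← Real.rpow_mul h2]
        congr 1
        push_cast
        field_simp
      rw [heq]
      exact Real.rpow_le_rpow (by positivity) h1 (by positivity)
    have hge : (⨅ j : ℕ, ∏ i ∈ Finset.range m, w (j + i)) ^ ((1:ℝ)/(m : ℝ)) ≤ r₂ :=
      ge_of_tendsto hsub (Filter.Eventually.of_forall hterm)
    have hgt1 : 1 < (⨅ j : ℕ, ∏ i ∈ Finset.range m, w (j + i)) ^ ((1:ℝ)/(m : ℝ)) := by
      rw [Real.one_lt_rpow_iff_of_pos (by linarith)]
      exact Or.inl ⟨hAm1, by positivity⟩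
    linarith
  · -- r₂ > 1 implies J-class
    intro hr
    set c : ℝ := (1 + r₂) / 2 with hcdef
    have hc : 1 < c := by simp [hcdef]; linarith
    have hcr : c < r₂ := by simp [hcdef]; linarith
    have hc0 : (0:ℝ) < c := by linarith
    have hev := (hr₂.eventually (eventually_gt_nhds hcr)).and (eventually_ge_atTop 1)
    obtain ⟨n0, hn0c, hn01⟩ := hev.exists
    have hn0R : (0:ℝ) < (n0 : ℝ) := by exact_mod_cast hn01
    -- every block of length n0 has product at least c^n0
    have hAblock : ∀ k : ℕ, c ^ n0 ≤ ∏ i ∈ Finset.range n0, w (k + i) := by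
      intro k
      have h2 : c ≤ (⨅ k : ℕ, ∏ i ∈ Finset.range n0, w (k + i)) ^ ((1:ℝ)/(n0:ℝ)) := hn0c.le
      have h1 : c ^ n0 ≤ ⨅ k : ℕ, ∏ i ∈ Finset.range n0, w (k + i) := by
        calc c ^ n0 ≤ ((⨅ k : ℕ, ∏ i ∈ Finset.range n0, w (k + i)) ^ ((1:ℝ)/(n0:ℝ))) ^ n0 :=
              pow_le_pow_left₀ hc0.le h2 n0
        _ = ⨅ k : ℕ, ∏ i ∈ Finset.range n0, w (k + i) := by
              rw [← Real.rpow_natCast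
                ((⨅ k : ℕ, ∏ i ∈ Finset.range n0, w (k + i)) ^ ((1:ℝ)/(n0:ℝ))) n0,
                ← Real.rpow_mul (Anonneg w hpos n0)]
              rw [one_div, inv_mul_cancel₀ hn0R.ne', Real.rpow_one]
      exact h1.trans (ciInf_le (Abdd w hpos n0) k)
    -- lower bound on the weights
    obtain ⟨C, hC⟩ := hbd
    set C' : ℝ := max C 1 with hC'def
    have hC'1 : (1:ℝ) ≤ C' := le_max_right _ _
    have hwC' : ∀ n, w n ≤ C' := fun n => le_trans (hC n) (le_max_left _ _)
    obtain ⟨n1, hn1⟩ : ∃ n1, n0 = n1 + 1 := ⟨n0 - 1, by omega⟩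
    have hm0 : ∀ j : ℕ, c ^ n0 / C' ^ n1 ≤ w j := by
      intro j
      have h1 := hAblock j
      rw [hn1, Finset.prod_range_succ'] at h1
      have h3 : ∏ i ∈ Finset.range n1, w (j + (i + 1)) ≤ C' ^ n1 := by
        calc ∏ i ∈ Finset.range n1, w (j + (i + 1)) ≤ ∏ _i ∈ Finset.range n1, C' :=
              Finset.prod_le_prod (fun i _ => (hpos _).le) (fun i _ => hwC' _)
        _ = C' ^ n1 := by rw [Finset.prod_const, Finset.card_range]
      have h4 : c ^ n0 ≤ C' ^ n1 * w j := by
        rw [hn1]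
        calc c ^ (n1 + 1) ≤ (∏ i ∈ Finset.range n1, w (j + (i + 1))) * w (j + 0) := h1
        _ ≤ C' ^ n1 * w (j + 0) := mul_le_mul_of_nonneg_right h3 (hpos _).le
        _ = C' ^ n1 * w j := by rw [Nat.add_zero]
      rw [div_le_iff₀ (by positivity), mul_comm]
      exact h4
    set e : ℝ := min (c ^ n0 / C' ^ n1) 1 with hedef
    have he0 : 0 < e := lt_min (by positivity) one_pos
    have he1 : e ≤ 1 := min_le_right _ _
    have hew : ∀ j, e ≤ w j := fun j => le_trans (min_le_left _ _) (hm0 j)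
    set d : ℝ := e ^ n0 / c ^ n0 with hddef
    have hd0 : 0 < d := by rw [hddef]; positivity
    have hgrow : ∀ mm kk : ℕ, d * c ^ mm ≤ ∏ i ∈ Finset.range mm, w (kk + i) :=
      grow w hpos c hc n0 hn01 e he0 he1 hew hAblock
    -- the vector e₀
    set e₀ : linf := lp.single ∞ 0 (1:ℂ) with he₀def
    have he₀ : e₀ ≠ 0 := by
      intro h
      have h0 : e₀ 0 = 1 := by
        rw [he₀def]; exact lp.single_apply_self (E := fun _ : ℕ => ℂ) ∞ 0 (1:ℂ)
      rw [h] at h0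
      simp [lp.coeFn_zero] at h0
    refine ⟨e₀, he₀, Set.eq_univ_iff_forall.2 fun y => ?_⟩
    -- right inverse vectors
    have hScoord : ∀ kk j : ℕ,
        ‖(if kk ≤ j then (y (j - kk)) / ((∏ i ∈ Finset.range kk, w ((j - kk) + i) : ℝ) : ℂ)
          else 0 : ℂ)‖ ≤ ‖y‖ / (d * c ^ kk) := by
      intro kk j
      by_cases h : kk ≤ j
      · rw [if_pos h, norm_div]
        have hnp : ‖((∏ i ∈ Finset.range kk, w ((j - kk) + i) : ℝ) : ℂ)‖
            = ∏ i ∈ Finset.range kk, w ((j - kk) + i) := by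
          rw [Complex.norm_real]
          exact abs_of_pos (Finset.prod_pos fun i _ => hpos _)
        rw [hnp]
        exact div_le_div₀ (norm_nonneg y)
          (lp.norm_apply_le_norm ENNReal.top_ne_zero y (j - kk))
          (by positivity) (hgrow kk (j - kk))
      · rw [if_neg h, norm_zero]
        positivity
    have hSmem : ∀ kk : ℕ, Memℓp (fun j : ℕ =>
        (if kk ≤ j then (y (j - kk)) / ((∏ i ∈ Finset.range kk, w ((j - kk) + i) : ℝ) : ℂ)
          else 0 : ℂ)) ∞ := by
      intro kk
      exact memℓp_infty ⟨‖y‖ / (d * c ^ kk), by rintro _ ⟨j, rfl⟩; exact hScoord kk j⟩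
    set S : ℕ → linf := fun kk => ⟨_, hSmem kk⟩ with hSdef
    have hSnorm : ∀ kk, ‖S kk‖ ≤ ‖y‖ / (d * c ^ kk) := fun kk =>
      lp.norm_le_of_forall_le (by positivity) (hScoord kk)
    have hBS : ∀ kk, (B ^ kk) (S kk) = y := by
      intro kk
      apply lp.ext
      funext n
      rw [pow_apply' w B hB kk (S kk) n]
      have hco : (S kk) (n + kk)
          = y n / ((∏ i ∈ Finset.range kk, w (n + i) : ℝ) : ℂ) := by
        show (if kk ≤ n + kk then
          (y (n + kk - kk)) / ((∏ i ∈ Finset.range kk, w ((n + kk - kk) + i) : ℝ) : ℂ)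
          else 0) = _
        rw [if_pos (Nat.le_add_left kk n), Nat.add_sub_cancel]
      have hne : (∏ i ∈ Finset.range kk, ((w (n + i) : ℝ) : ℂ)) ≠ 0 := by
        rw [← Complex.ofReal_prod]
        exact_mod_cast (Finset.prod_pos fun i _ => hpos _).ne'
      rw [hco, Complex.ofReal_prod, mul_comm, div_mul_cancel₀ _ hne]
    have hBe₀ : ∀ kk : ℕ, (B ^ (kk + 1)) e₀ = 0 := by
      intro kk
      apply lp.ext
      funext n
      rw [pow_apply' w B hB (kk + 1) e₀ n]
      have h0 : e₀ (n + (kk + 1)) = 0 := by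
        rw [he₀def]
        exact lp.single_apply_ne (E := fun _ : ℕ => ℂ) ∞ 0 (1:ℂ) (by omega)
      rw [h0, mul_zero, lp.coeFn_zero]
      rfl
    refine ⟨fun n => n + 1, fun a b h => Nat.add_lt_add_right h 1, fun n => e₀ + S (n + 1), ?_, ?_⟩
    · rw [tendsto_iff_norm_sub_tendsto_zero]
      have hb : Tendsto (fun n : ℕ => ‖y‖ / (d * c ^ (n + 1))) atTop (𝓝 0) := by
        apply Tendsto.div_atTop tendsto_const_nhds
        exact Tendsto.const_mul_atTop hd0
          ((tendsto_pow_atTop_atTop_of_one_lt hc).comp (tendsto_add_atTop_nat 1))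
      apply squeeze_zero (fun n => norm_nonneg _) (fun n => ?_) hb
      have : e₀ + S (n + 1) - e₀ = S (n + 1) := by abel
      rw [this]
      exact hSnorm (n + 1)
    · have heq : (fun n : ℕ => (B ^ (n + 1)) (e₀ + S (n + 1))) = fun _ => y := by
        funext n
        rw [map_add, hBe₀ n, hBS (n + 1), zero_add]
      exact heq ▸ tendsto_const_nhds

end JClassPaper
end
end

section
/- Let (w_n)_{n≥1} be a bounded sequence of positive reals and set m := liminf_n (∏_{k=1}^{n} w_k)^{1/n}, and assume m > 0. Suppose λ₀ ∈ ℂ and ε > 0 are such that the open disk K_ε(λ₀) := {λ : |λ − λ₀| < ε} is contained in K_m(0) := {λ : |λ| < m}. For λ ∈ K_ε(λ₀) define the sequence e_λ := (λⁿ/(w₁ w₂ ⋯ w_n))_{n≥1}; each e_λ belongs to c₀. Then the linear span of the set {e_λ : λ ∈ K_ε(λ₀)} is dense in c₀. -/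
open Filter Topology Metric
open scoped ENNReal

noncomputable section

namespace JClassPaper

variable {X : Type*} [NormedAddCommGroup X] [NormedSpace ℂ X]

section Aux
set_option maxHeartbeats 2000000
set_option synthInstance.maxHeartbeats 400000

/-- Coordinate evaluation as a continuous linear functional on `l∞`. -/
def coordCLM (n : ℕ) : linf →L[ℂ] ℂ :=
  LinearMap.mkContinuous
    { toFun := fun x => x n
      map_add' := fun x y => by
        simp only []
        rw [show ((x + y : linf) : ℕ → ℂ) n = ((x:ℕ→ℂ) + (y:ℕ→ℂ)) n from
          congrFun (lp.coeFn_add x y) n]; rfl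
      map_smul' := fun c x => by
        simp only []
        rw [show ((c • x : linf) : ℕ → ℂ) n = (c • (x:ℕ→ℂ)) n from
          congrFun (lp.coeFn_smul c x) n]; rfl
    } 1 (fun x => by
      rw [one_mul]
      exact (lp.norm_apply_le_norm (ENNReal.top_ne_zero) x n))

theorem coordCLM_apply (n : ℕ) (x : linf) : coordCLM n x = x n := rfl

set_option maxHeartbeats 2000000 in
set_option synthInstance.maxHeartbeats 1000000 in
theorem mem_of_forall_dual (S : Submodule ℂ linf) (hS : IsClosed (S : Set linf)) {x : linf}
    (h : ∀ φ : linf →L[ℂ] ℂ, (∀ y ∈ S, φ y = 0) → φ x = 0) : x ∈ S := by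
  by_contra hx
  haveI := hS
  have hxQ : (Submodule.Quotient.mk x : linf ⧸ S) ≠ 0 := by
    simpa [Submodule.Quotient.mk_eq_zero] using hx
  obtain ⟨g, hg1, hgx⟩ := exists_dual_vector ℂ _ (norm_ne_zero_iff.mpr hxQ)
  let mkCLM : linf →L[ℂ] linf ⧸ S :=
    LinearMap.mkContinuous S.mkQ 1 (fun y => by
      simpa using Submodule.Quotient.norm_mk_le S y)
  have h0 := h (g.comp mkCLM) (fun y hy => by
    have h1 : mkCLM y = 0 := by
      simpa [mkCLM, Submodule.Quotient.mk_eq_zero] using hy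
    rw [ContinuousLinearMap.comp_apply, h1, map_zero])
  rw [ContinuousLinearMap.comp_apply] at h0
  have h2 : mkCLM x = Submodule.Quotient.mk x := rfl
  rw [h2, hgx] at h0
  exact hxQ (by simpa [norm_eq_zero] using (Complex.ofReal_eq_zero.mp h0))

theorem growth (w : ℕ → ℝ) (hpos : ∀ n, 0 < w n) (hbd : ∃ C : ℝ, ∀ n, w n ≤ C) {m r : ℝ}
    (hm : m = Filter.liminf (fun n : ℕ => (∏ k ∈ Finset.range n, w k) ^ ((1:ℝ)/n)) atTop)
    (hr0 : 0 ≤ r) (hrm : r < m) :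
    ∀ᶠ n : ℕ in atTop, r ^ n ≤ ∏ i ∈ Finset.range n, w i := by
  obtain ⟨C, hC⟩ := hbd
  set a : ℕ → ℝ := fun n => (∏ k ∈ Finset.range n, w k) ^ ((1:ℝ)/n) with ha
  have hQpos : ∀ n, 0 < ∏ k ∈ Finset.range n, w k := fun n =>
    Finset.prod_pos fun i _ => hpos i
  have hbdd : ∀ n, a n ≤ max C 1 := by
    intro n
    rcases Nat.eq_zero_or_pos n with h0 | h1
    · subst h0
      simp only [a, Finset.range_zero, Finset.prod_empty, Real.one_rpow]
      exact le_max_right _ _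
    · have h1' : (∏ k ∈ Finset.range n, w k) ≤ (max C 1) ^ n := by
        calc ∏ k ∈ Finset.range n, w k ≤ ∏ _k ∈ Finset.range n, max C 1 :=
              Finset.prod_le_prod (fun i _ => (hpos i).le)
                (fun i _ => (hC i).trans (le_max_left _ _))
          _ = (max C 1) ^ n := by simp
      have h2 : a n ≤ ((max C 1) ^ n) ^ ((1:ℝ)/n) :=
        Real.rpow_le_rpow (hQpos n).le h1' (by positivity)
      refine h2.trans (le_of_eq ?_)
      rw [← Real.rpow_natCast (max C 1) n, ← Real.rpow_mul
        (le_trans zero_le_one (le_max_right _ _)), mul_one_div,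
        div_self (by exact_mod_cast h1.ne'), Real.rpow_one]
  have hcb : IsCoboundedUnder (· ≥ ·) atTop a :=
    IsBoundedUnder.isCoboundedUnder_ge (isBoundedUnder_of ⟨max C 1, fun n => hbdd n⟩)
  have hev : ∀ᶠ n in atTop, r < a n := by
    refine eventually_lt_of_lt_liminf ?_
      (isBoundedUnder_of ⟨0, fun n => Real.rpow_nonneg (hQpos n).le _⟩)
    rw [hm] at hrm; exact hrm
  filter_upwards [hev, eventually_ge_atTop 1] with n hn hn1
  have hne : n ≠ 0 := by omega
  have h3 : r ^ n < (a n) ^ n := pow_lt_pow_left₀ hn hr0 hne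
  have h4 : (a n) ^ n = ∏ k ∈ Finset.range n, w k := by
    rw [ha]
    simp only [one_div]
    exact Real.rpow_inv_natCast_pow (hQpos n).le hne
  rw [h4] at h3
  exact h3.le

theorem norm_lpsingle_le (n : ℕ) : ‖(lp.single ∞ n (1:ℂ) : linf)‖ ≤ 1 := by
  rw [lp.norm_eq_ciSup]
  refine ciSup_le fun i => ?_
  by_cases h : i = n
  · subst h; rw [lp.single_apply_self]; simp
  · rw [lp.single_apply_ne _ _ _ h]; simp

theorem isClosed_c0 : IsClosed (c0 : Set linf) := by
  refine isClosed_of_closure_subset fun x hx => ?_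
  show Tendsto (fun n => x n) atTop (𝓝 (0 : ℂ))
  refine Metric.tendsto_atTop.mpr fun δ hδ => ?_
  obtain ⟨y, hyc0, hdist⟩ := Metric.mem_closure_iff.mp hx (δ/2) (by linarith)
  have hy' : Tendsto (fun n => y n) atTop (𝓝 (0:ℂ)) := hyc0
  obtain ⟨N, hN⟩ := Metric.tendsto_atTop.mp hy' (δ/2) (by linarith)
  refine ⟨N, fun n hn => ?_⟩
  have h1 : ‖x n - y n‖ ≤ ‖x - y‖ := by
    have := lp.norm_apply_le_norm ENNReal.top_ne_zero (x - y) n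
    rwa [congrFun (lp.coeFn_sub x y) n] at this
  have h2 := hN n hn
  rw [dist_eq_norm, sub_zero] at h2 ⊢
  have hxy : ‖x - y‖ < δ/2 := by rwa [dist_eq_norm] at hdist
  calc ‖x n‖ ≤ ‖x n - y n‖ + ‖y n‖ := by
        simpa using norm_add_le (x n - y n) (y n)
    _ < δ/2 + δ/2 := by
        have := lt_of_le_of_lt h1 hxy
        linarith
    _ = δ := by ring

/-- The coefficient vectors of the power series `λ ↦ e_λ`. -/
def vv (w : ℕ → ℝ) : ℕ → linf
  | 0 => 0
  | (n+1) => (∏ i ∈ Finset.range (n+1), (w i : ℂ))⁻¹ • lp.single ∞ n 1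

end Aux

set_option maxHeartbeats 2000000
set_option synthInstance.maxHeartbeats 1000000

/-- if `K_ε(λ₀) ⊆ K_m(0)` where `m = liminf_n (w₁⋯w_n)^{1/n} > 0`, then the
span of the vectors `e_λ = (λⁿ/(w₁⋯w_n))_{n≥1}`, `λ ∈ K_ε(λ₀)`, is dense in `c₀`. -/
theorem stmt17 (w : ℕ → ℝ) (hpos : ∀ n, 0 < w n) (hbd : ∃ C : ℝ, ∀ n, w n ≤ C)
    (m : ℝ)
    (hm : m = Filter.liminf
      (fun n : ℕ => (∏ k ∈ Finset.range n, w k) ^ ((1:ℝ)/n)) atTop)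
    (hm0 : 0 < m)
    (l0 : ℂ) (ε : ℝ) (hε : 0 < ε)
    (hsub : Metric.ball l0 ε ⊆ Metric.ball (0:ℂ) m) :
    (Submodule.span ℂ {y : linf | ∃ l ∈ Metric.ball l0 ε,
        ∀ n : ℕ, y n = l ^ (n + 1) / (∏ i ∈ Finset.range (n + 1), (w i : ℂ))}
      ).topologicalClosure = c0 := by
  classical
  set genSet : Set linf := {y : linf | ∃ l ∈ Metric.ball l0 ε,
      ∀ n : ℕ, y n = l ^ (n + 1) / (∏ i ∈ Finset.range (n + 1), (w i : ℂ))} with hgenSet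
  have hQpos : ∀ n, 0 < ∏ i ∈ Finset.range n, w i := fun n =>
    Finset.prod_pos fun i _ => hpos i
  have hPc : ∀ n : ℕ, (∏ i ∈ Finset.range (n+1), (w i : ℂ))
      = ((∏ i ∈ Finset.range (n+1), w i : ℝ) : ℂ) := by
    intro n; push_cast; rfl
  have hPc0 : ∀ n, (∏ i ∈ Finset.range (n+1), (w i : ℂ)) ≠ 0 := by
    intro n; rw [hPc]; exact_mod_cast (hQpos (n+1)).ne'
  set v : ℕ → linf := vv w with hvdef
  have hv0 : v 0 = 0 := rfl
  have hvs : ∀ n, v (n+1) = (∏ i ∈ Finset.range (n+1), (w i : ℂ))⁻¹ • lp.single ∞ n 1 :=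
    fun n => rfl
  have hvnorm : ∀ n, ‖v (n+1)‖ ≤ (∏ i ∈ Finset.range (n+1), w i)⁻¹ := by
    intro n
    rw [hvs n, norm_smul]
    have h1 : ‖(∏ i ∈ Finset.range (n+1), (w i : ℂ))⁻¹‖
        = (∏ i ∈ Finset.range (n+1), w i)⁻¹ := by
      rw [norm_inv, hPc, Complex.norm_real, Real.norm_of_nonneg (hQpos (n+1)).le]
    rw [h1]
    calc (∏ i ∈ Finset.range (n+1), w i)⁻¹ * ‖(lp.single ∞ n (1:ℂ) : linf)‖
        ≤ (∏ i ∈ Finset.range (n+1), w i)⁻¹ * 1 :=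
          mul_le_mul_of_nonneg_left (norm_lpsingle_le n) (inv_nonneg.mpr (hQpos (n+1)).le)
      _ = (∏ i ∈ Finset.range (n+1), w i)⁻¹ := mul_one _
  have hvcoord : ∀ n j, (v (n+1) : ℕ → ℂ) j
      = if j = n then (∏ i ∈ Finset.range (n+1), (w i:ℂ))⁻¹ else 0 := by
    intro n j
    rw [hvs n, congrFun (lp.coeFn_smul _ _) j]
    by_cases h : j = n
    · subst h; simp [lp.single_apply_self]
    · simp [lp.single_apply_ne _ _ _ h, h]
  -- summability of the power series in `l∞`
  have hsummable : ∀ z : ℂ, ‖z‖ < m → Summable (fun k => ‖z ^ k • v k‖) := by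
    intro z hz
    obtain ⟨r, hzr, hrm⟩ : ∃ r, ‖z‖ < r ∧ r < m := ⟨(‖z‖ + m)/2, by linarith, by linarith⟩
    have hr0 : 0 < r := lt_of_le_of_lt (norm_nonneg z) hzr
    obtain ⟨N, hN⟩ := eventually_atTop.mp (growth w hpos hbd hm hr0.le hrm)
    rw [← summable_nat_add_iff (N+1)]
    have hgeo : Summable (fun k : ℕ => (‖z‖ / r) ^ (k + (N+1))) := by
      simp only [pow_add]
      exact (summable_geometric_of_lt_one (by positivity)
        (by rw [div_lt_one hr0]; exact hzr)).mul_right _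
    refine Summable.of_nonneg_of_le (fun k => norm_nonneg _) (fun k => ?_) hgeo
    have hk : k + (N+1) = (k+N) + 1 := by omega
    rw [hk, norm_smul, norm_pow]
    have h2 : r ^ (k+N+1) ≤ ∏ i ∈ Finset.range (k+N+1), w i := hN (k+N+1) (by omega)
    have h3 : (∏ i ∈ Finset.range (k+N+1), w i)⁻¹ ≤ (r ^ (k+N+1))⁻¹ := by
      exact inv_anti₀ (by positivity) h2
    calc ‖z‖ ^ (k+N+1) * ‖v (k+N+1)‖ ≤ ‖z‖ ^ (k+N+1) * (r ^ (k+N+1))⁻¹ :=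
          mul_le_mul_of_nonneg_left ((hvnorm (k+N)).trans h3) (by positivity)
      _ = (‖z‖ / r) ^ (k+N+1) := by rw [div_pow, div_eq_mul_inv]
  set g : ℂ → linf := fun z => ∑' k, z ^ k • v k with hgdef
  have hgsum : ∀ z : ℂ, ‖z‖ < m → HasSum (fun k => z ^ k • v k) (g z) := fun z hz =>
    ((hsummable z hz).of_norm).hasSum
  have hgcoord : ∀ z : ℂ, ‖z‖ < m → ∀ n, (g z : ℕ → ℂ) n
      = z ^ (n+1) / (∏ i ∈ Finset.range (n+1), (w i : ℂ)) := by
    intro z hz n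
    have h1 := (coordCLM n).hasSum (hgsum z hz)
    have h2 : (fun k => coordCLM n (z ^ k • v k))
        = fun k => if k = n+1 then z ^ (n+1) / (∏ i ∈ Finset.range (n+1), (w i : ℂ)) else 0 := by
      funext k
      match k with
      | 0 => simp [coordCLM_apply, hv0]
      | (j+1) =>
        rw [coordCLM_apply]
        have hc : ((z ^ (j+1) • v (j+1) : linf) : ℕ → ℂ) n
            = z ^ (j+1) * ((v (j+1) : ℕ → ℂ) n) := by
          rw [congrFun (lp.coeFn_smul _ _) n]; rfl
        rw [hc, hvcoord j n]
        by_cases hjn : n = j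
        · subst hjn
          simp [div_eq_mul_inv]
        · have hne : ¬ (j + 1 = n + 1) := by omega
          simp [hjn, hne, Ne.symm hjn]
    rw [h2] at h1
    exact h1.unique (hasSum_ite_eq (n+1) _)
  have hginset : ∀ l ∈ Metric.ball l0 ε, g l ∈ genSet := by
    intro l hl
    exact ⟨l, hl, fun n => hgcoord l (mem_ball_zero_iff.mp (hsub hl)) n⟩
  -- decay of coordinates
  have hdecay : ∀ z : ℂ, ‖z‖ < m →
      Tendsto (fun n : ℕ => z ^ (n+1) / (∏ i ∈ Finset.range (n+1), (w i : ℂ))) atTop (𝓝 0) := by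
    intro z hz
    rw [tendsto_zero_iff_norm_tendsto_zero]
    obtain ⟨r, hzr, hrm⟩ : ∃ r, ‖z‖ < r ∧ r < m := ⟨(‖z‖ + m)/2, by linarith, by linarith⟩
    have hr0 : 0 < r := lt_of_le_of_lt (norm_nonneg z) hzr
    obtain ⟨N, hN⟩ := eventually_atTop.mp (growth w hpos hbd hm hr0.le hrm)
    refine squeeze_zero' (g := fun n : ℕ => (‖z‖/r)^(n+1)) (Eventually.of_forall fun n => norm_nonneg _) ?_ ?_
    · filter_upwards [eventually_ge_atTop N] with n hn
      rw [norm_div, norm_pow, hPc n, Complex.norm_real,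
        Real.norm_of_nonneg (hQpos (n+1)).le]
      have h2 : r ^ (n+1) ≤ ∏ i ∈ Finset.range (n+1), w i := hN (n+1) (by omega)
      calc ‖z‖^(n+1) / (∏ i ∈ Finset.range (n+1), w i) ≤ ‖z‖^(n+1) / r^(n+1) := by
            gcongr
      _ = (‖z‖/r)^(n+1) := (div_pow _ _ _).symm
    · exact (tendsto_pow_atTop_nhds_zero_of_lt_one (by positivity)
        (by rw [div_lt_one hr0]; exact hzr)).comp (tendsto_add_atTop_nat 1)
  have hsubc0 : genSet ⊆ (c0 : Set linf) := by
    rintro y ⟨l, hl, hy⟩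
    show Tendsto (fun n => y n) atTop (𝓝 (0:ℂ))
    exact (hdecay l (mem_ball_zero_iff.mp (hsub hl))).congr (fun n => (hy n).symm)
  have hdir1 : (Submodule.span ℂ genSet).topologicalClosure ≤ c0 :=
    Submodule.topologicalClosure_minimal _ ((Submodule.span_le).mpr hsubc0) isClosed_c0
  have hdir2 : c0 ≤ (Submodule.span ℂ genSet).topologicalClosure := by
    intro x hx
    refine mem_of_forall_dual _ (Submodule.isClosed_topologicalClosure _) (fun φ hφ => ?_)
    have hφg : ∀ l ∈ Metric.ball l0 ε, φ (g l) = 0 := fun l hl =>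
      hφ _ ((Submodule.le_topologicalClosure _) (Submodule.subset_span (hginset l hl)))
    set p : FormalMultilinearSeries ℂ ℂ ℂ :=
      fun k => ContinuousMultilinearMap.mkPiRing ℂ (Fin k) (φ (v k)) with hpdef
    have hps : HasFPowerSeriesOnBall (fun z => φ (g z)) p 0 (ENNReal.ofReal m) := by
      refine ⟨?_, ENNReal.ofReal_pos.mpr hm0, ?_⟩
      · refine ENNReal.le_of_forall_nnreal_lt fun r hr => ?_
        have hrm : (r:ℝ) < m := by
          rw [← ENNReal.ofReal_coe_nnreal] at hr
          exact (ENNReal.ofReal_lt_ofReal_iff hm0).mp hr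
        have hzr : ‖((r:ℝ):ℂ)‖ < m := by simpa using hrm
        refine p.le_radius_of_summable_norm ?_
        have hs := (hsummable _ hzr).mul_left ‖φ‖
        refine Summable.of_nonneg_of_le (fun k => by positivity) (fun k => ?_) hs
        simp only [hpdef, ContinuousMultilinearMap.norm_mkPiRing]
        calc ‖φ (v k)‖ * (r:ℝ) ^ k ≤ (‖φ‖ * ‖v k‖) * (r:ℝ)^k :=
              mul_le_mul_of_nonneg_right (φ.le_opNorm (v k)) (by positivity)
          _ = ‖φ‖ * ‖((r:ℝ):ℂ) ^ k • v k‖ := by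
              rw [norm_smul, norm_pow]
              simp only [Complex.norm_real, Real.norm_eq_abs, NNReal.abs_eq]
              ring
      · intro y hy
        have hy' : ‖y‖ < m := by
          rw [Metric.emetric_ball] at hy
          exact mem_ball_zero_iff.mp hy
        rw [zero_add]
        have h1 := (hgsum y hy').mapL φ
        have h2 : (fun k => p k fun _ => y) = fun k => φ (y ^ k • v k) := by
          funext k
          simp only [hpdef, ContinuousMultilinearMap.mkPiRing_apply, map_smul,
            Finset.prod_const, Finset.card_univ, Fintype.card_fin, smul_eq_mul]
        rw [h2]
        exact h1
    have hanal : AnalyticOnNhd ℂ (fun z => φ (g z)) (Metric.ball (0:ℂ) m) := by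
      have := hps.analyticOnNhd
      rwa [Metric.emetric_ball] at this
    have hEq : Set.EqOn (fun z => φ (g z)) 0 (Metric.ball (0:ℂ) m) := by
      refine hanal.eqOn_zero_of_preconnected_of_eventuallyEq_zero
        ((convex_ball (0:ℂ) m).isPreconnected) (hsub (mem_ball_self hε)) ?_
      filter_upwards [isOpen_ball.mem_nhds (mem_ball_self hε)] with l hl
      exact hφg l hl
    have hF0 : (fun z => φ (g z)) =ᶠ[𝓝 (0:ℂ)] 0 := by
      filter_upwards [isOpen_ball.mem_nhds (mem_ball_self hm0)] with z hz using hEq hz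
    have hp0 : p = 0 := hps.hasFPowerSeriesAt.eq_zero_of_eventually hF0
    have hφv : ∀ k, φ (v k) = 0 := by
      intro k
      have h1 : (ContinuousMultilinearMap.mkPiRing ℂ (Fin k) (φ (v k))) = 0 := by
        simpa [hpdef] using congrFun hp0 k
      have h2 := congrArg
        (fun q : ContinuousMultilinearMap ℂ (fun _ : Fin k => ℂ) ℂ => q (fun _ => 1)) h1
      simpa [ContinuousMultilinearMap.mkPiRing_apply] using h2
    have hφsingle : ∀ n, φ (lp.single ∞ n (1:ℂ)) = 0 := by
      intro n
      have h1 := hφv (n+1)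
      rw [hvs n, map_smul, smul_eq_mul] at h1
      exact (mul_eq_zero.mp h1).resolve_left (inv_ne_zero (hPc0 n))
    have hx' : Tendsto (fun n => x n) atTop (𝓝 (0:ℂ)) := hx
    set s : ℕ → linf := fun N => ∑ n ∈ Finset.range N, (x n : ℂ) • lp.single ∞ n 1 with hsdef
    have hφs : ∀ N, φ (s N) = 0 := by
      intro N
      simp only [hsdef, map_sum, map_smul, smul_eq_mul, hφsingle, mul_zero]
      exact Finset.sum_const_zero
    have hscoord : ∀ N j, ((s N : linf) : ℕ → ℂ) j = if j ∈ Finset.range N then x j else 0 := by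
      intro N j
      rw [hsdef]
      rw [congrFun (lp.coeFn_sum _ _) j, Finset.sum_apply]
      have h1 : ∀ n ∈ Finset.range N,
          ((x n • lp.single ∞ n 1 : linf) : ℕ → ℂ) j = if j = n then x n else 0 := by
        intro n _
        rw [congrFun (lp.coeFn_smul _ _) j]
        by_cases h : j = n
        · subst h; simp [lp.single_apply_self]
        · simp [lp.single_apply_ne _ _ _ h, h]
      rw [Finset.sum_congr rfl h1]
      exact Finset.sum_ite_eq (Finset.range N) j (fun n => x n)
    have hst : Tendsto s atTop (𝓝 x) := by
      refine Metric.tendsto_atTop.mpr fun δ hδ => ?_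
      obtain ⟨N0, hN0⟩ := Metric.tendsto_atTop.mp hx' (δ/2) (by linarith)
      refine ⟨N0, fun N hN => ?_⟩
      rw [dist_eq_norm]
      have hcoord : ∀ j : ℕ, ‖((s N - x : linf) : ℕ → ℂ) j‖ ≤ δ/2 := by
        intro j
        rw [congrFun (lp.coeFn_sub _ _) j]
        simp only [Pi.sub_apply]
        rw [hscoord N j]
        by_cases h : j ∈ Finset.range N
        · rw [if_pos h, sub_self, norm_zero]; linarith
        · have hj : N ≤ j := by simpa [Finset.mem_range, not_lt] using h
          have h3 := hN0 j (le_trans hN hj)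
          rw [dist_eq_norm, sub_zero] at h3
          rw [if_neg h, zero_sub, norm_neg]
          linarith
      have h4 : ‖s N - x‖ ≤ δ/2 := by
        rw [lp.norm_eq_ciSup]
        exact ciSup_le hcoord
      linarith
    have h0 : Tendsto (fun N => φ (s N)) atTop (𝓝 (φ x)) := (φ.continuous.tendsto x).comp hst
    have h1 : Tendsto (fun N => φ (s N)) atTop (𝓝 (0:ℂ)) :=
      (tendsto_congr fun N => (hφs N).symm).mp tendsto_const_nhds
    exact tendsto_nhds_unique h0 h1
  exact le_antisymm hdir1 hdir2

end JClassPaper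
end
end
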